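/- arXiv:1404.3343 — 7 statements merged into one kernel-verified Lean document; each statement's English description precedes it below -/
import Mathlib

section
/- If a field E of characteristic zero has a small absolute Galois group (i.e., for every n there are only finitely many open subgroups of index n), then for every natural number n the quotient group E^× / (E^×)^n is finite. -/
/-- A profinite group is *small* if for every `n` it has only finitely many open
subgroups of index `n`. -/
def IsSmallGroup (G : Type*) [Group G] [TopologicalSpace G] : Prop :=
  ∀ n : ℕ, {H : Subgroup G | IsOpen (H : Set G) ∧ H.index = n}.Finite

lemma auxRootsFinite (K : Type*) [Field K] [DecidableEq K] {n : ℕ} (hn : 0 < n) (α : K) :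
    {x : K | x ^ n = α}.Finite := by
  apply Set.Finite.subset ((Polynomial.nthRoots n α).toFinset.finite_toSet)
  intro x hx
  simpa [Polynomial.mem_nthRoots hn] using hx

lemma auxCardRoots (K : Type*) [Field K] [DecidableEq K] {n : ℕ} (hn : 0 < n) (α : K) :
    {x : K | x ^ n = α}.ncard ≤ n := by
  have hsub : {x : K | x ^ n = α} ⊆ ↑(Polynomial.nthRoots n α).toFinset := by
    intro x hx
    simpa [Polynomial.mem_nthRoots hn] using hx
  calc {x : K | x ^ n = α}.ncard ≤ ((Polynomial.nthRoots n α).toFinset : Set K).ncard :=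
        Set.ncard_le_ncard hsub (Finset.finite_toSet _)
    _ = (Polynomial.nthRoots n α).toFinset.card := Set.ncard_coe_finset _
    _ ≤ Multiset.card (Polynomial.nthRoots n α) := Multiset.toFinset_card_le _
    _ ≤ n := Polynomial.card_nthRoots n α

/-- Functions with values in `n`-th roots of unity that are constant on left cosets
of a finite-index subgroup form a finite set. -/
lemma auxConstFinite {K G : Type*} [Field K] [Group G] {n : ℕ} (hn : 0 < n)
    (H : Subgroup G) (hidx : H.index ≠ 0) :
    {f : G → K | (∀ σ, f σ ^ n = 1) ∧ ∀ σ : G, ∀ τ ∈ H, f (σ * τ) = f σ}.Finite := by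
  have : H.FiniteIndex := ⟨hidx⟩
  have hμ : {x : K | x ^ n = 1}.Finite := by classical exact auxRootsFinite K hn 1
  have := hμ.to_subtype
  have hfin : Finite (G ⧸ H → {x : K | x ^ n = 1}) := by infer_instance
  rw [← Set.finite_coe_iff]
  have key : ∀ f : G → K, (∀ σ : G, ∀ τ ∈ H, f (σ * τ) = f σ) →
      ∀ σ : G, f ((QuotientGroup.mk σ : G ⧸ H).out) = f σ := by
    intro f hf σ
    obtain ⟨τ, hτ⟩ := QuotientGroup.mk_out_eq_mul H σ
    rw [hτ]
    exact hf σ τ τ.2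
  apply Finite.of_injective
    (fun f : {f : G → K | (∀ σ, f σ ^ n = 1) ∧ ∀ σ : G, ∀ τ ∈ H, f (σ * τ) = f σ} =>
      (fun c : G ⧸ H => (⟨f.1 c.out, f.2.1 _⟩ : {x : K | x ^ n = 1})))
  rintro ⟨f, hf1, hf2⟩ ⟨g, hg1, hg2⟩ h
  ext σ
  have h1 := congrFun h (QuotientGroup.mk σ)
  simp only [Subtype.mk.injEq] at h1
  calc f σ = f ((QuotientGroup.mk σ : G ⧸ H).out) := (key f hf2 σ).symm
    _ = g ((QuotientGroup.mk σ : G ⧸ H).out) := h1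
    _ = g σ := key g hg2 σ

/-- The set of candidate Kummer cocycle functions is finite when the group is small. -/
lemma auxFuncSetFinite {K G : Type*} [Field K] [Group G] [TopologicalSpace G]
    (hsmall : ∀ m : ℕ, {H : Subgroup G | IsOpen (H : Set G) ∧ H.index = m}.Finite)
    {n : ℕ} (hn : 0 < n) :
    {f : G → K | (∀ σ, f σ ^ n = 1) ∧ ∃ H : Subgroup G, IsOpen (H : Set G) ∧ 0 < H.index ∧
      H.index ≤ n ∧ ∀ σ : G, ∀ τ ∈ H, f (σ * τ) = f σ}.Finite := by
  have h𝒮 : {H : Subgroup G | IsOpen (H : Set G) ∧ 0 < H.index ∧ H.index ≤ n}.Finite := by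
    apply Set.Finite.subset (Set.Finite.biUnion (Finset.Icc 1 n).finite_toSet
      (fun m _ => hsmall m))
    rintro H ⟨h1, h2, h3⟩
    exact Set.mem_biUnion (by simp only [Finset.coe_Icc, Set.mem_Icc]; omega) ⟨h1, rfl⟩
  apply Set.Finite.subset (Set.Finite.biUnion h𝒮
    (fun H hH => auxConstFinite (K := K) hn H hH.2.1.ne'))
  rintro f ⟨hf1, H, hopen, hpos, hle, hconst⟩
  exact Set.mem_biUnion ⟨hopen, hpos, hle⟩ ⟨hf1, hconst⟩

lemma auxFixed (E : Type*) [Field E] [CharZero E] (x : AlgebraicClosure E)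
    (h : ∀ σ : AlgebraicClosure E ≃ₐ[E] AlgebraicClosure E, σ x = x) :
    ∃ e : E, algebraMap E (AlgebraicClosure E) e = x := by
  by_contra hc
  push_neg at hc
  have hx : x ∉ (⊥ : Subalgebra E (AlgebraicClosure E)) := by
    rw [Algebra.mem_bot]
    rintro ⟨e, he⟩
    exact hc e he
  obtain ⟨y, hne, hconj⟩ := (notMem_iff_exists_ne_and_isConjRoot
    (IsSeparable.of_integral E x) (IsAlgClosed.splits _)).mp hx
  obtain ⟨σ, hσ⟩ := hconj.symm.exists_algEquiv
  exact hne (by rw [← hσ, h σ])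

/-- If a field `E` of characteristic zero has a small absolute Galois group, then for every
`n ≥ 1` the quotient `Eˣ/(Eˣ)ⁿ` is finite. -/
theorem stmt0 (E : Type*) [Field E] [CharZero E]
    (hsmall : IsSmallGroup (AlgebraicClosure E ≃ₐ[E] AlgebraicClosure E)) :
    ∀ n : ℕ, 0 < n → Finite (Eˣ ⧸ (powMonoidHom n : Eˣ →* Eˣ).range) := by
  classical
  intro n hn
  set K := AlgebraicClosure E with hK
  set G := K ≃ₐ[E] K with hG
  set S : Set (G → K) := {f : G → K | (∀ σ, f σ ^ n = 1) ∧ ∃ H : Subgroup G,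
      IsOpen (H : Set G) ∧ 0 < H.index ∧ H.index ≤ n ∧
      ∀ σ : G, ∀ τ ∈ H, f (σ * τ) = f σ} with hSdef
  have hS : S.Finite := auxFuncSetFinite hsmall hn
  -- choose n-th roots
  have exroot : ∀ a : Eˣ, ∃ b : K, b ^ n = algebraMap E K (a : E) :=
    fun a => IsAlgClosed.exists_pow_nat_eq _ hn
  choose b hb using exroot
  have hαne : ∀ a : Eˣ, algebraMap E K (a : E) ≠ 0 :=
    fun a => by simp
  have hbne : ∀ a : Eˣ, b a ≠ 0 := by
    intro a h
    exact hαne a (by rw [← hb a, h, zero_pow hn.ne'])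
  set f : Eˣ → G → K := fun a σ => σ (b a) / b a with hfdef
  have horb : ∀ a : Eˣ, MulAction.orbit G (b a) ⊆ {x : K | x ^ n = algebraMap E K (a : E)} := by
    rintro a x ⟨σ, rfl⟩
    show (σ (b a)) ^ n = _
    rw [← map_pow, hb a]
    exact σ.commutes _
  have hfS : ∀ a : Eˣ, f a ∈ S := by
    intro a
    constructor
    · intro σ
      have h2 : (σ (b a)) ^ n = algebraMap E K (a : E) := by
        rw [← map_pow, hb a]
        exact σ.commutes _
      show (σ (b a) / b a) ^ n = 1
      rw [div_pow, h2, hb a]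
      exact div_self (hαne a)
    · refine ⟨MulAction.stabilizer G (b a), ?_, ?_, ?_, ?_⟩
      · have hint : IsIntegral E (b a) := Algebra.IsIntegral.isIntegral _
        have hfd : FiniteDimensional E (IntermediateField.adjoin E {b a}) :=
          IntermediateField.adjoin.finiteDimensional hint
        refine Subgroup.isOpen_mono ?_
          (IntermediateField.fixingSubgroup_isOpen (IntermediateField.adjoin E {b a}))
        intro σ hσ
        rw [MulAction.mem_stabilizer_iff, AlgEquiv.smul_def]
        exact (IntermediateField.mem_fixingSubgroup_iff (IntermediateField.adjoin E {b a}) σ).mp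
          hσ (b a) (IntermediateField.mem_adjoin_simple_self E (b a))
      · rw [MulAction.index_stabilizer,
          Set.ncard_pos (((auxRootsFinite K hn (algebraMap E K (a : E)))).subset (horb a))]
        exact ⟨b a, MulAction.mem_orbit_self _⟩
      · rw [MulAction.index_stabilizer]
        exact le_trans (Set.ncard_le_ncard (horb a)
          (auxRootsFinite K hn (algebraMap E K (a : E)))) (auxCardRoots K hn _)
      · intro σ τ hτ
        have hτb : τ (b a) = b a := hτ
        show (σ * τ) (b a) / b a = σ (b a) / b a
        rw [AlgEquiv.mul_apply, hτb]
  -- key injectivity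
  have hkey : ∀ a a' : Eˣ, f a = f a' →
      (QuotientGroup.mk a : Eˣ ⧸ (powMonoidHom n : Eˣ →* Eˣ).range) = QuotientGroup.mk a' := by
    intro a a' hff
    have hfix : ∀ σ : G, σ (b a / b a') = b a / b a' := by
      intro σ
      have h1 : σ (b a) / b a = σ (b a') / b a' := congrFun hff σ
      have hσa' : σ (b a') ≠ 0 := by
        simpa using hbne a'
      have hσa : σ (b a) ≠ 0 := by
        simpa using hbne a
      rw [map_div₀, div_eq_div_iff hσa' (hbne a')]
      rw [div_eq_div_iff (hbne a) (hbne a')] at h1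
      linear_combination h1
    obtain ⟨e, he⟩ := auxFixed E (b a / b a') hfix
    have hcne : b a / b a' ≠ 0 := div_ne_zero (hbne a) (hbne a')
    have hene : e ≠ 0 := by
      intro h
      rw [h, map_zero] at he
      exact hcne he.symm
    have hpow : algebraMap E K (e ^ n) = algebraMap E K ((a : E) / (a' : E)) := by
      rw [map_pow, he, div_pow, hb a, hb a', map_div₀]
    have hepow : e ^ n = (a : E) / (a' : E) :=
      (algebraMap E K).injective hpow
    rw [QuotientGroup.eq]
    refine ⟨(Units.mk0 e hene)⁻¹, ?_⟩
    ext
    show (((Units.mk0 e hene)⁻¹ : Eˣ) : E) ^ n = ((a⁻¹ * a' : Eˣ) : E)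
    rw [Units.val_inv_eq_inv_val, Units.val_mk0, inv_pow, hepow]
    rw [Units.val_mul]
    rw [Units.val_inv_eq_inv_val]
    field_simp
  -- conclude
  have hfinS : Finite ↥S := hS.to_subtype
  apply Finite.of_injective
    (fun x : Eˣ ⧸ (powMonoidHom n : Eˣ →* Eˣ).range => (⟨f x.out, hfS _⟩ : ↥S))
  intro x y hxy
  simp only [Subtype.mk.injEq] at hxy
  have h := hkey _ _ hxy
  rwa [QuotientGroup.out_eq', QuotientGroup.out_eq'] at h
end

section
/- Let E be a field of characteristic zero containing the n-th roots of unity. Then E^×/(E^×)^n is finite if and only if E has only finitely many cyclic Galois extensions (inside a fixed algebraic closure) of degree dividing n. -/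
open Polynomial IntermediateField

section KummerHelpers

variable {E : Type*} [Field E] [CharZero E] {n : ℕ}
variable {F : Type*} [Field F] [Algebra E F]

private lemma rou_mem_bot (hn : 0 < n) {ζ : E} (hζ : IsPrimitiveRoot ζ n) {x : F}
    (hx : x ^ n = 1) : x ∈ (⊥ : IntermediateField E F) := by
  have : NeZero n := ⟨hn.ne'⟩
  have hζ' : IsPrimitiveRoot (algebraMap E F ζ) n :=
    hζ.map_of_injective (algebraMap E F).injective
  obtain ⟨i, -, rfl⟩ := hζ'.eq_pow_of_pow_eq_one hx
  rw [← map_pow]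
  exact ⟨ζ ^ i, rfl⟩

private lemma adjoin_eq_of_pow_eq (hn : 0 < n) {ζ : E} (hζ : IsPrimitiveRoot ζ n) {α β : F}
    (hβ : β ≠ 0) (h : α ^ n = β ^ n) : E⟮α⟯ = E⟮β⟯ := by
  have hu : (α / β) ^ n = 1 := by rw [div_pow, h, div_self (pow_ne_zero _ hβ)]
  obtain ⟨e, he⟩ := rou_mem_bot hn hζ hu
  have he' : algebraMap E F e = α / β := he
  have hαβ : α = algebraMap E F e * β := by rw [he']; field_simp
  apply le_antisymm
  · rw [adjoin_simple_le_iff, hαβ]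
    exact mul_mem (IntermediateField.algebraMap_mem _ e) (mem_adjoin_simple_self E β)
  · rw [adjoin_simple_le_iff]
    have he0 : algebraMap E F e ≠ 0 := by
      intro h1
      rw [he', _root_.div_eq_zero_iff] at h1
      rcases h1 with h1 | h1
      · rw [h1, zero_pow hn.ne'] at h
        exact hβ (pow_eq_zero_iff hn.ne' |>.mp h.symm)
      · exact hβ h1
    have : β = (algebraMap E F e)⁻¹ * α := by rw [hαβ]; field_simp
    rw [this, ← map_inv₀]
    exact mul_mem (IntermediateField.algebraMap_mem _ _) (mem_adjoin_simple_self E α)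

private lemma adjoin_mul_algebraMap_unit {e : E} (he : e ≠ 0) (x : F) :
    E⟮x * algebraMap E F e⟯ = E⟮x⟯ := by
  apply le_antisymm
  · rw [adjoin_simple_le_iff]
    exact mul_mem (mem_adjoin_simple_self E x) (IntermediateField.algebraMap_mem _ e)
  · rw [adjoin_simple_le_iff]
    have he' : algebraMap E F e ≠ 0 := by
      simpa using he
    have h2 : x * algebraMap E F e * algebraMap E F e⁻¹ = x := by
      rw [map_inv₀]; field_simp
    have hm := mul_mem (mem_adjoin_simple_self E (x * algebraMap E F e))
      (IntermediateField.algebraMap_mem E⟮x * algebraMap E F e⟯ e⁻¹)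
    rwa [h2] at hm

private lemma cyclic_and_dvd {K : Type*} [Field K] [Algebra E K]
    [FiniteDimensional E K] [IsGalois E K]
    (hn : 0 < n) {ζ : E} (hζ : IsPrimitiveRoot ζ n) {α : K} (hα : α ≠ 0)
    (htop : E⟮α⟯ = ⊤) {c : E} (hc : α ^ n = algebraMap E K c) :
    IsCyclic (K ≃ₐ[E] K) ∧ Module.finrank E K ∣ n := by
  have f1 : ∀ σ : K ≃ₐ[E] K, (σ α / α) ^ n = 1 := by
    intro σ
    rw [div_pow, ← map_pow, hc, AlgEquiv.commutes, ← hc, div_self (pow_ne_zero _ hα)]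
  have f2 : ∀ σ τ : K ≃ₐ[E] K, σ (τ α / α) = τ α / α := by
    intro σ τ
    obtain ⟨e, he⟩ := rou_mem_bot hn hζ (f1 τ)
    have he' : algebraMap E K e = τ α / α := he
    rw [← he', AlgEquiv.commutes]
  have hσα : ∀ σ : K ≃ₐ[E] K, σ α ≠ 0 := fun σ h =>
    hα (σ.injective (h.trans (map_zero σ).symm))
  let χ : (K ≃ₐ[E] K) →* Kˣ :=
    { toFun := fun σ => Units.mk0 (σ α / α) (div_ne_zero (hσα σ) hα)
      map_one' := by ext; simp [div_self hα]
      map_mul' := by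
        intro σ τ
        have h3 : σ (τ α) = (τ α / α) * σ α := by
          conv_lhs => rw [show τ α = (τ α / α) * α by field_simp]
          rw [map_mul, f2]
        ext
        simp only [Units.val_mul, Units.val_mk0, AlgEquiv.mul_apply, h3]
        field_simp }
  have hone : ∀ σ : K ≃ₐ[E] K, σ α = α → σ = 1 := by
    intro σ hσ
    have hint : IsIntegral E α := IsIntegral.of_finite E α
    have hadj : Algebra.adjoin E {α} = ⊤ := by
      have h4 := congrArg IntermediateField.toSubalgebra htop
      rwa [IntermediateField.adjoin_simple_toSubalgebra_of_isAlgebraic hint.isAlgebraic,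
        IntermediateField.top_toSubalgebra] at h4
    have hle : Algebra.adjoin E {α} ≤ AlgHom.equalizer (σ : K →ₐ[E] K) (AlgHom.id E K) :=
      Algebra.adjoin_le (Set.singleton_subset_iff.mpr hσ)
    ext x
    exact hle (hadj ▸ Algebra.mem_top : x ∈ Algebra.adjoin E {α})
  have hχinj : Function.Injective χ := by
    rw [injective_iff_map_eq_one]
    intro σ hσ
    apply hone
    have h6 : σ α / α = 1 := by
      have := congrArg Units.val hσ
      rw [Units.val_one] at this
      exact this
    exact (div_eq_one_iff_eq hα).mp h6
  have hpow : ∀ σ : K ≃ₐ[E] K, χ σ ^ n = 1 := by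
    intro σ
    ext
    push_cast
    exact f1 σ
  have hcyc : IsCyclic (K ≃ₐ[E] K) := by
    have hfin : Finite χ.range := Set.Finite.to_subtype (Set.finite_range χ)
    have : IsCyclic χ.range := subgroup_units_cyclic _
    exact isCyclic_of_surjective _ (MonoidHom.ofInjective hχinj).symm.surjective
  refine ⟨hcyc, ?_⟩
  obtain ⟨g, hg⟩ := hcyc
  have h5 : Module.finrank E K = orderOf g := by
    rw [← IsGalois.card_aut_eq_finrank, orderOf_eq_card_of_forall_mem_zpowers hg,
      Nat.card_eq_fintype_card]
  rw [h5]
  apply orderOf_dvd_of_pow_eq_one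
  apply hχinj
  rw [map_pow, hpow, map_one]

variable (E n) in
/-- A choice of an `n`-th root of `a` in the algebraic closure of `E`. -/
private noncomputable def krt (hn : 0 < n) (a : Eˣ) : AlgebraicClosure E :=
  (IsAlgClosed.exists_pow_nat_eq (algebraMap E (AlgebraicClosure E) (a : E)) hn).choose

private lemma krt_pow (hn : 0 < n) (a : Eˣ) :
    krt E n hn a ^ n = algebraMap E (AlgebraicClosure E) (a : E) :=
  (IsAlgClosed.exists_pow_nat_eq (algebraMap E (AlgebraicClosure E) (a : E)) hn).choose_spec

private lemma krt_ne_zero (hn : 0 < n) (a : Eˣ) : krt E n hn a ≠ 0 := by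
  intro h
  have := krt_pow hn a
  rw [h, zero_pow hn.ne'] at this
  exact a.ne_zero ((_root_.map_eq_zero _).mp this.symm)

variable (E n) in
/-- The Kummer extension attached to `a`. -/
private noncomputable def kField (hn : 0 < n) (a : Eˣ) :
    IntermediateField E (AlgebraicClosure E) :=
  E⟮krt E n hn a⟯

private lemma kField_congr (hn : 0 < n) {ζ : E} (hζ : IsPrimitiveRoot ζ n) {a b : Eˣ}
    (h : (a : Eˣ ⧸ (powMonoidHom n : Eˣ →* Eˣ).range) = b) :
    kField E n hn a = kField E n hn b := by
  rw [QuotientGroup.eq] at h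
  obtain ⟨u, hu⟩ := h
  have hu' : (u : Eˣ) ^ n = a⁻¹ * b := hu
  have hpow : (krt E n hn a * algebraMap E (AlgebraicClosure E) (u : E)) ^ n
      = krt E n hn b ^ n := by
    rw [mul_pow, krt_pow, krt_pow, ← map_pow, ← map_mul, ← Units.val_pow_eq_pow_val, hu']
    norm_cast
    rw [mul_inv_cancel_left]
  have h1 : E⟮krt E n hn a * algebraMap E (AlgebraicClosure E) (u : E)⟯ = kField E n hn b :=
    adjoin_eq_of_pow_eq hn hζ (krt_ne_zero hn b) hpow
  rw [kField, ← h1, adjoin_mul_algebraMap_unit u.ne_zero]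

private lemma gen_adjoin_top (x : AlgebraicClosure E) :
    E⟮IntermediateField.AdjoinSimple.gen E x⟯ = (⊤ : IntermediateField E ↥E⟮x⟯) := by
  apply IntermediateField.lift_injective
  rw [lift_adjoin_simple, lift_top]
  rfl

private lemma kField_mem (hn : 0 < n) {ζ : E} (hζ : IsPrimitiveRoot ζ n) (a : Eˣ) :
    FiniteDimensional E (kField E n hn a) ∧ IsGalois E (kField E n hn a) ∧
      IsCyclic (kField E n hn a ≃ₐ[E] kField E n hn a) ∧
      Module.finrank E (kField E n hn a) ∣ n := by
  set α := krt E n hn a with hα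
  have hsp : kField E n hn a =
      IntermediateField.adjoin E ((X ^ n - C (a : E)).rootSet (AlgebraicClosure E)) := by
    apply le_antisymm
    · rw [kField, adjoin_simple_le_iff]
      apply IntermediateField.subset_adjoin
      rw [mem_rootSet]
      refine ⟨X_pow_sub_C_ne_zero hn _, ?_⟩
      simp [krt_pow hn a]
    · rw [adjoin_le_iff]
      intro x hx
      rw [mem_rootSet] at hx
      have hx' : x ^ n = α ^ n := by
        have := hx.2
        simp only [map_sub, map_pow, aeval_X, aeval_C, sub_eq_zero] at this
        rw [this, krt_pow]
      rw [kField, ← adjoin_eq_of_pow_eq hn hζ (krt_ne_zero hn a) hx']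
      exact mem_adjoin_simple_self E x
  have hspl : IsSplittingField E (kField E n hn a) (X ^ n - C (a : E)) := by
    rw [hsp]
    exact adjoin_rootSet_isSplittingField (IsAlgClosed.splits _)
  have hfd : FiniteDimensional E (kField E n hn a) :=
    Polynomial.IsSplittingField.finiteDimensional _ (X ^ n - C (a : E))
  have hnormal : Normal E (kField E n hn a) := Normal.of_isSplittingField (X ^ n - C (a : E))
  have hgal : IsGalois E (kField E n hn a) := { }
  -- the generator
  set g : ↥(kField E n hn a) := IntermediateField.AdjoinSimple.gen E α with hg
  have hgne : g ≠ 0 := by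
    intro h
    exact krt_ne_zero hn a (congrArg Subtype.val h)
  have hgtop : E⟮g⟯ = ⊤ := gen_adjoin_top α
  have hgpow : g ^ n = algebraMap E ↥(kField E n hn a) (a : E) := by
    apply Subtype.val_injective
    push_cast
    have : (g : AlgebraicClosure E) = α := rfl
    rw [this, krt_pow]
  obtain ⟨h1, h2⟩ := cyclic_and_dvd hn hζ hgne hgtop hgpow
  exact ⟨hfd, hgal, h1, h2⟩

end KummerHelpers

/-- Kummer-theoretic criterion: for a field `E` of characteristic zero containing the `n`-th
roots of unity, `Eˣ/(Eˣ)ⁿ` is finite iff `E` has only finitely many cyclic Galois extensions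
(inside a fixed algebraic closure) of degree dividing `n`. -/
theorem stmt1 (E : Type*) [Field E] [CharZero E] (n : ℕ) (hn : 0 < n)
    (hμ : ∃ ζ : E, IsPrimitiveRoot ζ n) :
    Finite (Eˣ ⧸ (powMonoidHom n : Eˣ →* Eˣ).range) ↔
      {K : IntermediateField E (AlgebraicClosure E) |
        FiniteDimensional E K ∧ IsGalois E K ∧ IsCyclic (K ≃ₐ[E] K) ∧
          Module.finrank E K ∣ n}.Finite := by
  obtain ⟨ζ, hζ⟩ := hμ
  constructor
  · intro hQ
    have hrange : (Set.range (fun q : Eˣ ⧸ (powMonoidHom n : Eˣ →* Eˣ).range =>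
        kField E n hn q.out)).Finite := Set.finite_range _
    refine hrange.subset ?_
    rintro K ⟨hfd, hgal, hcyc, hdvd⟩
    haveI := hfd; haveI := hgal; haveI := hcyc
    set d := Module.finrank E ↥K with hd
    have hd0 : 0 < d := Module.finrank_pos
    have hζd : (primitiveRoots d E).Nonempty := by
      refine ⟨ζ ^ (n / d), ?_⟩
      rw [mem_primitiveRoots hd0]
      exact hζ.pow hn (Nat.div_mul_cancel hdvd).symm
    obtain ⟨α, hmem, htop⟩ := exists_root_adjoin_eq_top_of_isCyclic E ↥K hζd
    obtain ⟨e, he⟩ := hmem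
    have hKeq : K = E⟮(α : AlgebraicClosure E)⟯ := by
      have h8 := congrArg IntermediateField.lift htop
      rw [lift_adjoin_simple, lift_top] at h8
      exact h8.symm
    have hαpow : (α : AlgebraicClosure E) ^ d = algebraMap E (AlgebraicClosure E) e := by
      have h9 := congrArg (algebraMap ↥K (AlgebraicClosure E)) he
      rw [← IsScalarTower.algebraMap_apply, map_pow] at h9
      exact h9.symm
    rcases eq_or_ne e 0 with rfl | he0
    · have hα0 : (α : AlgebraicClosure E) = 0 := by
        rw [map_zero] at hαpow
        exact pow_eq_zero_iff hd0.ne' |>.mp hαpow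
      refine ⟨(1 : Eˣ), ?_⟩
      show kField E n hn (((1 : Eˣ) : Eˣ ⧸ (powMonoidHom n : Eˣ →* Eˣ).range)).out = K
      rw [kField_congr hn hζ (QuotientGroup.out_eq' _)]
      have h10 : kField E n hn 1 = ⊥ := by
        apply le_antisymm _ bot_le
        rw [kField, adjoin_simple_le_iff]
        apply rou_mem_bot hn hζ
        rw [krt_pow hn 1]
        simp
      have h11 : K = ⊥ := by
        apply le_antisymm _ bot_le
        rw [hKeq, hα0, adjoin_simple_le_iff]
        exact zero_mem ⊥
      rw [h10, h11]
    · set u : Eˣ := Units.mk0 e he0 with hu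
      set a : Eˣ := u ^ (n / d) with ha
      have hα0 : (α : AlgebraicClosure E) ≠ 0 := by
        intro h12
        apply he0
        have : (0 : AlgebraicClosure E) = algebraMap E (AlgebraicClosure E) e := by
          rw [← hαpow, h12, zero_pow hd0.ne']
        exact ((_root_.map_eq_zero _).mp this.symm)
      have hpow : krt E n hn a ^ n = (α : AlgebraicClosure E) ^ n := by
        rw [krt_pow]
        have h13 : ((a : Eˣ) : E) = e ^ (n / d) := by
          rw [ha, hu, Units.val_pow_eq_pow_val, Units.val_mk0]
        rw [h13, map_pow, ← hαpow, ← pow_mul, Nat.mul_div_cancel' hdvd]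
      refine ⟨((a : Eˣ) : Eˣ ⧸ (powMonoidHom n : Eˣ →* Eˣ).range), ?_⟩
      show kField E n hn _ = K
      rw [kField_congr hn hζ (QuotientGroup.out_eq' _), kField,
        adjoin_eq_of_pow_eq hn hζ hα0 hpow, ← hKeq]
  · intro hS
    -- the compositum of all the cyclic extensions
    set S := {K : IntermediateField E (AlgebraicClosure E) |
        FiniteDimensional E K ∧ IsGalois E K ∧ IsCyclic (K ≃ₐ[E] K) ∧
          Module.finrank E K ∣ n} with hSdef
    haveI : Finite ↥S := hS.to_subtype
    set L0 : IntermediateField E (AlgebraicClosure E) := ⨆ K : S, (K : IntermediateField E _)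
      with hL0
    haveI : ∀ K : S, FiniteDimensional E (K : IntermediateField E (AlgebraicClosure E)) :=
      fun K => K.2.1
    haveI hL0fd : FiniteDimensional E L0 :=
      IntermediateField.finiteDimensional_iSup_of_finite
    set L : IntermediateField E (AlgebraicClosure E) :=
      normalClosure E ↥L0 (AlgebraicClosure E) with hL
    haveI hLfd : FiniteDimensional E ↥L := normalClosure.is_finiteDimensional _ _ _
    haveI hLnormal : Normal E ↥L := normalClosure.normal _ _ _
    haveI hLgal : IsGalois E ↥L := { }
    have hL0L : L0 ≤ L := IntermediateField.le_normalClosure L0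
    have hmemL : ∀ a : Eˣ, krt E n hn a ∈ L := by
      intro a
      apply hL0L
      have h1 : kField E n hn a ∈ S := by
        obtain ⟨m1, m2, m3, m4⟩ := kField_mem hn hζ a
        exact ⟨m1, m2, m3, m4⟩
      have h2 : kField E n hn a ≤ L0 :=
        le_iSup (fun K : S => (K : IntermediateField E (AlgebraicClosure E))) ⟨_, h1⟩
      exact h2 (mem_adjoin_simple_self E _)
    haveI : NeZero n := ⟨hn.ne'⟩
    -- the character attached to a class
    set β : Eˣ ⧸ (powMonoidHom n : Eˣ →* Eˣ).range → ↥L :=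
      fun q => ⟨krt E n hn q.out, hmemL q.out⟩ with hβ
    have hβne : ∀ q, β q ≠ 0 := by
      intro q h
      exact krt_ne_zero hn q.out (congrArg Subtype.val h)
    have hβpow : ∀ q, β q ^ n = algebraMap E ↥L ((q.out : Eˣ) : E) := by
      intro q
      apply Subtype.val_injective
      have h1 : ((β q ^ n : ↥L) : AlgebraicClosure E) = krt E n hn q.out ^ n := by
        push_cast; rfl
      rw [h1, krt_pow]
      exact IsScalarTower.algebraMap_apply E ↥L (AlgebraicClosure E) _
    have hfix : ∀ (q) (σ : ↥L ≃ₐ[E] ↥L), (σ (β q) / β q) ^ n = 1 := by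
      intro q σ
      rw [div_pow, ← map_pow, hβpow, AlgEquiv.commutes, ← hβpow,
        div_self (pow_ne_zero _ (hβne q))]
    set g : (Eˣ ⧸ (powMonoidHom n : Eˣ →* Eˣ).range) → ((↥L ≃ₐ[E] ↥L) → rootsOfUnity n ↥L) :=
      fun q σ => ⟨Units.mk0 (σ (β q) / β q)
          (div_ne_zero (fun h => hβne q (σ.injective (h.trans (map_zero σ).symm))) (hβne q)),
        by
          rw [mem_rootsOfUnity, Units.ext_iff, Units.val_pow_eq_pow_val, Units.val_mk0,
            Units.val_one]
          exact hfix q σ⟩ with hg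
    haveI : Finite ((↥L ≃ₐ[E] ↥L) → rootsOfUnity n ↥L) := by
      haveI : Finite (↥L ≃ₐ[E] ↥L) := Finite.of_fintype _
      infer_instance
    apply Finite.of_injective g
    intro q1 q2 h
    have hval : ∀ σ : ↥L ≃ₐ[E] ↥L, σ (β q1) / β q1 = σ (β q2) / β q2 := by
      intro σ
      have := congrArg (fun f => ((f σ : Lˣ) : ↥L)) h
      exact this
    -- the ratio is fixed by the Galois group
    have hratio : ∀ σ : ↥L ≃ₐ[E] ↥L, σ (β q1 / β q2) = β q1 / β q2 := by
      intro σ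
      rw [map_div₀]
      rw [div_eq_div_iff (fun h => hβne q2 (σ.injective (h.trans (map_zero σ).symm))) (hβne q2)]
      have h14 := hval σ
      rw [div_eq_div_iff (hβne q1) (hβne q2)] at h14
      linear_combination h14
    have hbot : β q1 / β q2 ∈ (⊥ : IntermediateField E ↥L) := by
      have hfixtop : IntermediateField.fixingSubgroup (⊥ : IntermediateField E ↥L) = ⊤ := by
        rw [eq_top_iff]
        intro σ _
        rw [IntermediateField.mem_fixingSubgroup_iff]
        intro x hx
        obtain ⟨e, rfl⟩ := IntermediateField.mem_bot.mp hx
        exact σ.commutes e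
      have h15 := IsGalois.fixedField_fixingSubgroup (⊥ : IntermediateField E ↥L)
      rw [hfixtop] at h15
      rw [← h15]
      exact fun σ => hratio σ
    obtain ⟨e, he⟩ := hbot
    have he' : algebraMap E ↥L e = β q1 / β q2 := he
    have he0 : e ≠ 0 := by
      intro h16
      rw [h16, map_zero] at he'
      exact hβne q1 (by
        have := he'.symm
        rw [_root_.div_eq_zero_iff] at this
        rcases this with h17 | h17
        · exact h17
        · exact absurd h17 (hβne q2))
    have hq12 : (q1.out : E) = e ^ n * (q2.out : E) := by
      have h18 : β q1 = algebraMap E ↥L e * β q2 := by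
        rw [he', div_mul_cancel₀ _ (hβne q2)]
      have h19 := hβpow q1
      rw [h18, mul_pow, ← map_pow, hβpow q2, ← map_mul] at h19
      exact ((algebraMap E ↥L).injective h19).symm
    -- conclude the classes are equal
    have hq12' : q1.out = Units.mk0 e he0 ^ n * q2.out := by
      ext
      rw [Units.val_mul, Units.val_pow_eq_pow_val, Units.val_mk0]
      exact hq12
    have : (q1.out : Eˣ ⧸ (powMonoidHom n : Eˣ →* Eˣ).range)
        = (q2.out : Eˣ ⧸ (powMonoidHom n : Eˣ →* Eˣ).range) := by
      rw [QuotientGroup.eq]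
      refine ⟨(Units.mk0 e he0)⁻¹, ?_⟩
      rw [powMonoidHom_apply, hq12', mul_inv, inv_pow]
      rw [mul_comm ((Units.mk0 e he0) ^ n)⁻¹ (Quotient.out q2)⁻¹, mul_assoc,
        mul_comm _ (Quotient.out q2), ← mul_assoc, inv_mul_cancel, one_mul]
    rwa [QuotientGroup.out_eq', QuotientGroup.out_eq'] at this
end

section
/- Let S be a non-abelian finite simple group, κ an infinite cardinal, and G = S^κ the profinite product. Then for every n ∈ ℕ and every open subgroup H ≤ G of index at most m, the number of closed normal subgroups N of H with H/N cyclic of order n is at most 2^{m!}; in particular this number is finite, uniformly bounded in terms of m. -/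
/-- The set of closed normal subgroups `N` of `G` with `G/N` cyclic of order `n`,
encoded as kernels of surjective homomorphisms onto the cyclic group of order `n`. -/
def cyclicKernels (G : Type*) [Group G] [TopologicalSpace G] (n : ℕ) : Set (Subgroup G) :=
  {N | IsClosed (N : Set G) ∧
    ∃ f : G →* Multiplicative (ZMod n), Function.Surjective f ∧ f.ker = N}

open scoped commutatorElement

section Aux

open Subgroup

/-- The subgroup of a product group consisting of elements trivial on `B`. -/
def kerProj {ι : Type*} (S : Type*) [Group S] (B : Set ι) : Subgroup (ι → S) where
  carrier := {x | ∀ i ∈ B, x i = 1}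
  one_mem' := fun i _ => rfl
  mul_mem' := fun {a b} ha hb i hi => by
    simp [Pi.mul_apply, ha i hi, hb i hi]
  inv_mem' := fun {a} ha i hi => by
    simp [Pi.inv_apply, ha i hi]

lemma mem_kerProj {ι S : Type*} [Group S] {B : Set ι} {x : ι → S} :
    x ∈ kerProj S B ↔ ∀ i ∈ B, x i = 1 := Iff.rfl

instance kerProj_normal {ι S : Type*} [Group S] (B : Set ι) : (kerProj S B).Normal := by
  constructor
  intro x hx g i hi
  simp [Pi.mul_apply, Pi.inv_apply, hx i hi]

/-- Decomposing a product of commutators given by a list as an ordered product over `Fin k`. -/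
lemma fin_commutator_decomp {G : Type*} [Group G] :
    ∀ (k : ℕ) (l : List (G × G)), l.length ≤ k →
      ∃ a b : Fin k → G,
        (l.map fun p => ⁅p.1, p.2⁆).prod = (List.ofFn fun j => ⁅a j, b j⁆).prod := by
  intro k
  induction k with
  | zero =>
    intro l hl
    rw [Nat.le_zero, List.length_eq_zero_iff] at hl
    subst hl
    exact ⟨1, 1, by simp⟩
  | succ k ih =>
    intro l hl
    cases l with
    | nil =>
      refine ⟨1, 1, ?_⟩
      simp [List.ofFn_succ]
    | cons p t =>
      obtain ⟨a, b, hab⟩ := ih t (by simpa using Nat.succ_le_succ_iff.mp hl)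
      refine ⟨Fin.cons p.1 a, Fin.cons p.2 b, ?_⟩
      rw [List.ofFn_succ]
      simp only [Fin.cons_zero, Fin.cons_succ, List.map_cons, List.prod_cons, hab]

/-- Every element of the closure of the commutator set is a product of commutators. -/
lemma list_commutator_pairs {G : Type*} [Group G] (l : List G)
    (h : ∀ y ∈ l, y ∈ commutatorSet G) :
    ∃ L : List (G × G), (L.map fun p => ⁅p.1, p.2⁆).prod = l.prod := by
  induction l with
  | nil => exact ⟨[], rfl⟩
  | cons a t ih =>
    obtain ⟨L, hL⟩ := ih fun y hy => h y (List.mem_cons_of_mem a hy)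
    obtain ⟨g₁, g₂, hg⟩ := h a List.mem_cons_self
    exact ⟨(g₁, g₂) :: L, by simp [hL, hg]⟩

/-- Bounded commutator width for a finite nonabelian simple group,
with a uniform decomposition choosing trivial data at the identity. -/
lemma comm_width (S : Type*) [Group S] [Finite S] [IsSimpleGroup S]
    (hnonab : ∃ a b : S, a * b ≠ b * a) :
    ∃ (k : ℕ) (a b : S → Fin k → S), (∀ j, a 1 j = 1 ∧ b 1 j = 1) ∧
      ∀ s, s = (List.ofFn fun j => ⁅a s j, b s j⁆).prod := by
  classical
  have hcomm : commutator S = ⊤ := by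
    rcases (inferInstance : (commutator S).Normal).eq_bot_or_eq_top with h | h
    · obtain ⟨a, b, hab⟩ := hnonab
      exfalso
      apply hab
      have hmem : ⁅a, b⁆ ∈ commutator S :=
        Subgroup.commutator_mem_commutator (Subgroup.mem_top a) (Subgroup.mem_top b)
      rw [h, Subgroup.mem_bot] at hmem
      exact commutatorElement_eq_one_iff_mul_comm.mp hmem
    · exact h
  have hlist : ∀ s : S, ∃ L : List (S × S), (L.map fun p => ⁅p.1, p.2⁆).prod = s := by
    intro s
    have hs : s ∈ Subgroup.closure (commutatorSet S) := by
      rw [← commutator_eq_closure, hcomm]; trivial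
    rw [← Subgroup.mem_toSubmonoid, Subgroup.closure_toSubmonoid] at hs
    obtain ⟨l, hl, hlp⟩ := Submonoid.exists_list_of_mem_closure hs
    have hl' : ∀ y ∈ l, y ∈ commutatorSet S := by
      intro y hy
      rcases hl y hy with h | h
      · exact h
      · rw [Set.mem_inv] at h
        obtain ⟨g₁, g₂, hg⟩ := h
        exact ⟨g₂, g₁, by rw [← commutatorElement_inv, hg, inv_inv]⟩
    obtain ⟨L, hL⟩ := list_commutator_pairs l hl'
    exact ⟨L, by rw [hL, hlp]⟩
  choose L hL using hlist
  haveI := Fintype.ofFinite S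
  set k := Finset.univ.sup fun s : S => (L s).length with hk
  have hlen : ∀ s : S, (L s).length ≤ k := fun s =>
    Finset.le_sup (f := fun s : S => (L s).length) (Finset.mem_univ s)
  have hfin : ∀ s : S, ∃ a b : Fin k → S,
      s = (List.ofFn fun j => ⁅a j, b j⁆).prod := by
    intro s
    obtain ⟨a, b, hab⟩ := fin_commutator_decomp k (L s) (hlen s)
    exact ⟨a, b, by rw [← hab, hL s]⟩
  choose a b hab using hfin
  refine ⟨k, fun s => if s = 1 then 1 else a s, fun s => if s = 1 then 1 else b s, ?_, ?_⟩
  · intro j; simp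
  · intro s
    by_cases hs : s = 1
    · subst hs
      simp only [if_pos rfl]
      rw [List.prod_eq_one]
      intro x hx
      rw [List.mem_ofFn] at hx
      obtain ⟨j, rfl⟩ := hx
      simp
    · simp only [if_neg hs]; exact hab s

lemma hom_list_ofFn_prod {G G' : Type*} [Group G] [Group G'] (f : G →* G') {k : ℕ}
    (w : Fin k → G) :
    f (List.ofFn w).prod = (List.ofFn fun j => f (w j)).prod := by
  rw [map_list_prod, List.map_ofFn]
  simp [Function.comp_def]

/-- An element supported on a finite set, all of whose "single-coordinate" pieces lie in a
subgroup, lies in that subgroup. -/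
lemma supported_mem {ι S : Type*} [Group S] [DecidableEq ι] (D : Subgroup (ι → S)) :
    ∀ (F : Finset ι) (y : ι → S), (∀ i ∉ F, y i = 1) →
      (∀ i, Pi.mulSingle i (y i) ∈ D) → y ∈ D := by
  classical
  intro F
  induction F using Finset.induction with
  | empty =>
    intro y hy _
    have : y = 1 := funext fun i => hy i (Finset.notMem_empty i)
    rw [this]; exact one_mem D
  | @insert j F hj ih =>
    intro y hy hs
    have hupd : Function.update y j 1 ∈ D := by
      apply ih
      · intro i hi
        by_cases h : i = j
        · subst h; simp
        · rw [Function.update_of_ne h]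
          exact hy i (fun hmem => hi (Finset.mem_of_mem_insert_of_ne hmem h))
      · intro i
        by_cases h : i = j
        · subst h
          simpa using one_mem D
        · rw [Function.update_of_ne h]
          exact hs i
    have hdec : y = Pi.mulSingle j (y j) * Function.update y j 1 := by
      funext i
      by_cases h : i = j
      · subst h; simp
      · simp [Pi.mulSingle_eq_of_ne h, Function.update_of_ne h]
    rw [hdec]
    exact mul_mem (hs j) hupd

end Aux

/-- For a non-abelian finite simple group `S` and an infinite index set `ι`, in `G = S^ι` every
open subgroup `H` of index at most `m` has at most `2^(m!)` closed normal subgroups with cyclic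
quotient of order `n`; in particular this number is finite, uniformly in `m`. -/
theorem stmt3 (S : Type*) [Group S] [Finite S] [IsSimpleGroup S]
    (hnonab : ∃ a b : S, a * b ≠ b * a)
    (ι : Type*) [Infinite ι] [TopologicalSpace S] [DiscreteTopology S]
    (n m : ℕ) (H : Subgroup (ι → S)) (hopen : IsOpen (H : Set (ι → S)))
    (hindex : H.index ≤ m) :
    (cyclicKernels H n).Finite ∧ Nat.card (cyclicKernels H n) ≤ 2 ^ Nat.factorial m := by
  classical
  -- Step 1: H contains a basic open normal subgroup kerProj S F
  obtain ⟨F, hFH⟩ : ∃ F : Finset ι, kerProj S (↑F : Set ι) ≤ H := by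
    obtain ⟨I, u, hu, hsub⟩ := (isOpen_pi_iff.mp hopen) 1 H.one_mem
    refine ⟨I, fun x hx => hsub ?_⟩
    intro i hi
    have : x i = 1 := hx i hi
    rw [this]
    exact (hu i hi).2
  set C := H.normalCore with hC
  have hCH : C ≤ H := Subgroup.normalCore_le H
  have hKC : kerProj S (↑F : Set ι) ≤ C := Subgroup.normal_le_normalCore.mpr hFH
  -- Step 2: index bookkeeping
  have hKfin : (kerProj S (↑F : Set ι)).index ≠ 0 := by
    have hker : kerProj S (↑F : Set ι) =
        (MonoidHom.mk' (fun x : ι → S => fun i : F => x i) (fun a b => rfl)).ker := by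
      ext x
      simp only [MonoidHom.mem_ker, MonoidHom.mk'_apply, mem_kerProj]
      constructor
      · intro h; funext i; exact h i i.2
      · intro h i hi; exact congrFun h ⟨i, hi⟩
    rw [hker, Subgroup.index_ker]
    exact Nat.card_pos.ne'
  have hHne : H.index ≠ 0 := fun h => hKfin <|
    Nat.eq_zero_of_zero_dvd (h ▸ Subgroup.index_dvd_of_le hFH)
  have hQHfin : Finite ((ι → S) ⧸ H) := by
    have h1 : Nat.card ((ι → S) ⧸ H) ≠ 0 := by
      rwa [← Subgroup.index_eq_card]
    exact (Nat.card_ne_zero.mp h1).2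
  have hCfinne : C.index ≠ 0 := by
    rw [hC, Subgroup.normalCore_eq_ker, Subgroup.index_ker]
    exact Nat.card_pos.ne'
  have hCindex : C.index ≤ Nat.factorial m := by
    rw [hC, Subgroup.normalCore_eq_ker, Subgroup.index_ker]
    calc Nat.card (MulAction.toPermHom (ι → S) ((ι → S) ⧸ H)).range
        ≤ Nat.card (Equiv.Perm ((ι → S) ⧸ H)) :=
          Nat.card_le_card_of_injective _ Subtype.val_injective
      _ = Nat.factorial (Nat.card ((ι → S) ⧸ H)) := by
          haveI := Fintype.ofFinite ((ι → S) ⧸ H)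
          rw [Nat.card_eq_fintype_card, Nat.card_eq_fintype_card, Fintype.card_perm]
      _ ≤ Nat.factorial m := Nat.factorial_le (by
          rw [← Subgroup.index_eq_card]; exact hindex)
  -- Step 3: C is a basic subgroup kerProj S A
  set A : Set ι := {i | ∀ c ∈ C, c i = 1} with hA
  have hcenter : Subgroup.center S = ⊥ := by
    rcases Subgroup.Normal.eq_bot_or_eq_top
        (inferInstance : (Subgroup.center S).Normal) with h | h
    · exact h
    · exfalso
      obtain ⟨a, b, hab⟩ := hnonab
      exact hab ((Subgroup.mem_center_iff.mp (h ▸ Subgroup.mem_top a) b).symm)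
  have hsingle : ∀ i, i ∉ A → ∀ s : S, Pi.mulSingle i s ∈ C := by
    intro i hiA s
    set T : Subgroup S :=
      { carrier := {s : S | Pi.mulSingle i s ∈ C}
        one_mem' := by
          show Pi.mulSingle i (1 : S) ∈ C
          rw [Pi.mulSingle_one]
          exact one_mem C
        mul_mem' := fun {a b} ha hb => by
          show Pi.mulSingle i (a * b) ∈ C
          rw [Pi.mulSingle_mul]
          exact mul_mem ha hb
        inv_mem' := fun {a} ha => by
          show Pi.mulSingle i a⁻¹ ∈ C
          rw [Pi.mulSingle_inv]
          exact inv_mem ha } with hT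
    haveI hTnormal : T.Normal := by
      constructor
      intro t ht g
      show Pi.mulSingle i (g * t * g⁻¹) ∈ C
      rw [Pi.mulSingle_mul, Pi.mulSingle_mul, Pi.mulSingle_inv]
      exact (Subgroup.normalCore_normal H).conj_mem _ ht _
    have hTne : T ≠ ⊥ := by
      simp only [hA, Set.mem_setOf_eq] at hiA
      push_neg at hiA
      obtain ⟨c, hcC, hci⟩ := hiA
      have hnotcen : c i ∉ Subgroup.center S := by
        rw [hcenter]; simpa using hci
      obtain ⟨g, hg⟩ : ∃ g : S, g * c i ≠ c i * g := by
        by_contra h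
        push_neg at h
        exact hnotcen (Subgroup.mem_center_iff.mpr h)
      have hu : ⁅c, Pi.mulSingle i g⁆ ∈ C := by
        rw [commutatorElement_def]
        have heq : c * (Pi.mulSingle i g : ι → S) * c⁻¹ * (Pi.mulSingle i g : ι → S)⁻¹ =
            c * ((Pi.mulSingle i g : ι → S) * c⁻¹ * (Pi.mulSingle i g : ι → S)⁻¹) := by group
        rw [heq]
        exact mul_mem hcC ((Subgroup.normalCore_normal H).conj_mem _ (inv_mem hcC) _)
      have huval : ⁅c, Pi.mulSingle i g⁆ = (Pi.mulSingle i ⁅c i, g⁆ : ι → S) := by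
        funext j
        by_cases hj : j = i
        · subst hj
          simp [commutatorElement_def, Pi.mul_apply, Pi.inv_apply, Pi.mulSingle_eq_same]
        · simp [commutatorElement_def, Pi.mul_apply, Pi.inv_apply,
            Pi.mulSingle_eq_of_ne hj]
      have hmemT : ⁅c i, g⁆ ∈ T := by
        show (Pi.mulSingle i ⁅c i, g⁆ : ι → S) ∈ C
        rw [← huval]; exact hu
      intro hbot
      rw [hbot, Subgroup.mem_bot] at hmemT
      exact hg (commutatorElement_eq_one_iff_mul_comm.mp hmemT).symm
    have hTtop : T = ⊤ := by
      rcases hTnormal.eq_bot_or_eq_top with h | h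
      · exact absurd h hTne
      · exact h
    show s ∈ T
    rw [hTtop]
    exact Subgroup.mem_top s
  have hCA : C = kerProj S A := by
    apply le_antisymm
    · intro c hc i hi
      exact hi c hc
    · intro x hx
      set y : ι → S := fun i => if i ∈ F then x i else 1 with hy
      set z : ι → S := fun i => if i ∈ F then 1 else x i with hz
      have hxyz : x = y * z := by
        funext i
        by_cases hi : i ∈ F <;> simp [hy, hz, Pi.mul_apply, hi]
      have hzC : z ∈ C := hKC (fun i hi => by
        simp [hz, Finset.mem_coe.mp hi])
      have hyC : y ∈ C := by
        apply supported_mem C F y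
        · intro i hi
          simp [hy, hi]
        · intro i
          by_cases hiA : i ∈ A
          · have h1 : y i = 1 := by
              by_cases hiF : i ∈ F
              · have hxi : x i = 1 := hx i hiA
                simp [hy, hiF, hxi]
              · simp [hy, hiF]
            rw [h1]
            simpa using one_mem C
          · exact hsingle i hiA (y i)
      rw [hxyz]
      exact mul_mem hyC hzC
  -- Step 4: every kernel in cyclicKernels contains J := C.subgroupOf H
  obtain ⟨k, a, b, hone, hdecomp⟩ := comm_width S hnonab
  set J : Subgroup H := C.subgroupOf H with hJ
  haveI hJnormal : J.Normal := (Subgroup.normalCore_normal H).comap H.subtype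
  have hJle : ∀ N ∈ cyclicKernels H n, J ≤ N := by
    rintro N ⟨-, f, -, hker⟩ h hh
    rw [← hker, MonoidHom.mem_ker]
    have hhC : (h : ι → S) ∈ C := hh
    have hmemH : ∀ (w : Fin k → S → S) (hw : ∀ j, w j 1 = 1) (j : Fin k),
        (fun i => w j ((h : ι → S) i)) ∈ H := by
      intro w hw j
      apply hCH
      rw [hCA]
      intro i hi
      show w j ((h : ι → S) i) = 1
      have h1 : (h : ι → S) i = 1 := by
        rw [hCA] at hhC
        exact hhC i hi
      rw [h1, hw j]
    set Aj : Fin k → H := fun j =>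
      ⟨fun i => a ((h : ι → S) i) j, hmemH (fun j s => a s j) (fun j => (hone j).1) j⟩ with hAj
    set Bj : Fin k → H := fun j =>
      ⟨fun i => b ((h : ι → S) i) j, hmemH (fun j s => b s j) (fun j => (hone j).2) j⟩ with hBj
    have hcoe : (((List.ofFn fun j => ⁅Aj j, Bj j⁆).prod : H) : ι → S) = (h : ι → S) := by
      have e1 : H.subtype (List.ofFn fun j => ⁅Aj j, Bj j⁆).prod
          = (List.ofFn fun j => H.subtype ⁅Aj j, Bj j⁆).prod :=
        hom_list_ofFn_prod H.subtype _
      have e1' : (((List.ofFn fun j => ⁅Aj j, Bj j⁆).prod : H) : ι → S)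
          = (List.ofFn fun j => ((⁅Aj j, Bj j⁆ : H) : ι → S)).prod := e1
      rw [e1']
      funext i
      have e2 : Pi.evalMonoidHom (fun _ : ι => S) i
            (List.ofFn fun j => ((⁅Aj j, Bj j⁆ : H) : ι → S)).prod
          = (List.ofFn fun j =>
              Pi.evalMonoidHom (fun _ : ι => S) i ((⁅Aj j, Bj j⁆ : H) : ι → S)).prod :=
        hom_list_ofFn_prod (Pi.evalMonoidHom (fun _ : ι => S) i) _
      have e2' : (List.ofFn fun j => ((⁅Aj j, Bj j⁆ : H) : ι → S)).prod i
          = (List.ofFn fun j => (((⁅Aj j, Bj j⁆ : H) : ι → S) i)).prod := e2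
      rw [e2']
      have e3 : (fun j : Fin k => (((⁅Aj j, Bj j⁆ : H) : ι → S) i))
          = fun j : Fin k => ⁅a ((h : ι → S) i) j, b ((h : ι → S) i) j⁆ := rfl
      rw [e3]
      exact (hdecomp ((h : ι → S) i)).symm
    have hprod : h = (List.ofFn fun j => ⁅Aj j, Bj j⁆).prod := Subtype.ext hcoe.symm
    rw [hprod, hom_list_ofFn_prod f]
    apply List.prod_eq_one
    intro x hx
    rw [List.mem_ofFn] at hx
    obtain ⟨j, rfl⟩ := hx
    show f ⁅Aj j, Bj j⁆ = 1
    rw [map_commutatorElement]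
    exact commutatorElement_eq_one_iff_mul_comm.mpr (mul_comm _ _)
  -- Step 5: counting
  have hJindex : J.index ≤ Nat.factorial m ∧ J.index ≠ 0 := by
    have hrel : C.relIndex H * H.index = C.index := Subgroup.relIndex_mul_index hCH
    have hJi : J.index = C.relIndex H := rfl
    constructor
    · rw [hJi]
      calc C.relIndex H ≤ C.relIndex H * H.index :=
            Nat.le_mul_of_pos_right _ (Nat.pos_of_ne_zero hHne)
        _ = C.index := hrel
        _ ≤ Nat.factorial m := hCindex
    · rw [hJi]
      intro h0
      rw [h0, zero_mul] at hrel
      exact hCfinne hrel.symm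
  haveI hQfin : Finite (H ⧸ J) := by
    have h1 : Nat.card (H ⧸ J) ≠ 0 := by
      rw [← Subgroup.index_eq_card]; exact hJindex.2
    exact (Nat.card_ne_zero.mp h1).2
  haveI : Fintype (H ⧸ J) := Fintype.ofFinite _
  -- the injection
  set Φ : cyclicKernels H n → Subgroup (H ⧸ J) :=
    fun N => Subgroup.map (QuotientGroup.mk' J) (N : Subgroup H) with hΦ
  have hΦinj : Function.Injective Φ := by
    intro N₁ N₂ hN
    have key : ∀ N : cyclicKernels H n,
        Subgroup.comap (QuotientGroup.mk' J) (Φ N) = (N : Subgroup H) := by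
      intro N
      rw [hΦ]
      rw [Subgroup.comap_map_eq, QuotientGroup.ker_mk']
      exact sup_eq_left.mpr (hJle N N.2)
    have := congrArg (Subgroup.comap (QuotientGroup.mk' J)) hN
    rw [key N₁, key N₂] at this
    exact Subtype.ext this
  haveI hSubFin : Finite (Subgroup (H ⧸ J)) :=
    Finite.of_injective (fun K : Subgroup (H ⧸ J) => (K : Set (H ⧸ J)))
      SetLike.coe_injective
  haveI hKKfin : Finite (cyclicKernels H n) := Finite.of_injective Φ hΦinj
  constructor
  · exact Set.finite_coe_iff.mp hKKfin
  · calc Nat.card (cyclicKernels H n)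
        ≤ Nat.card (Subgroup (H ⧸ J)) := Nat.card_le_card_of_injective Φ hΦinj
      _ ≤ Nat.card (Set (H ⧸ J)) :=
          Nat.card_le_card_of_injective _ SetLike.coe_injective
      _ = 2 ^ Nat.card (H ⧸ J) := by
          rw [Nat.card_eq_fintype_card, Nat.card_eq_fintype_card, Fintype.card_set]
      _ ≤ 2 ^ Nat.factorial m := by
          apply Nat.pow_le_pow_right (by norm_num)
          rw [← Subgroup.index_eq_card]
          exact hJindex.1
end

section
/- Let G be a profinite group and n ∈ ℕ. If for every prime p dividing n the number I_G(p) of closed normal subgroups N ⊴ G with G/N cyclic of order p is finite, then I_G(n) ≤ 2^{n^s}, where s = Σ_{p|n prime} I_G(p). In particular, I_G(n) is finite. -/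
universe u


theorem torsion_card_bound' (m : ℕ) :
    ∀ (A : Type u) [inst : CommGroup A], 0 < m → (∀ a : A, a ^ m = 1) →
      (∀ p : ℕ, p.Prime → p ∣ m → Finite {a : A // a ^ p = 1}) →
      Finite A ∧
        Nat.card A ≤ m.factorization.prod fun q e => Nat.card {a : A // a ^ q = 1} ^ e := by
  induction m using Nat.strong_induction_on with
  | _ m ih =>
  intro A inst hm hexp hfin
  rcases eq_or_ne m 1 with rfl | hm1
  · haveI : Subsingleton A :=
      ⟨fun a b => by rw [← pow_one a, hexp a, ← pow_one b, hexp b]⟩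
    refine ⟨inferInstance, ?_⟩
    have h1 : Nat.card A ≤ 1 := by
      have := Nat.card_le_card_of_injective (fun _ : A => (PUnit.unit : PUnit.{1}))
        (fun a b _ => Subsingleton.elim a b)
      simpa using this
    simpa [Nat.factorization_one] using h1
  · set p := m.minFac with hpdef
    have hp : p.Prime := Nat.minFac_prime hm1
    have hpd : p ∣ m := m.minFac_dvd
    set k := m / p with hkdef
    have hk : k * p = m := Nat.div_mul_cancel hpd
    have hk0 : 0 < k := Nat.div_pos (m.minFac_le hm) hp.pos
    have hkm : k < m := Nat.div_lt_self hm hp.one_lt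
    have hkdvd : k ∣ m := ⟨p, hk.symm⟩
    set φ : A →* A := powMonoidHom p with hφ
    have hexpB : ∀ b : φ.range, b ^ k = 1 := by
      rintro ⟨b, a, rfl⟩
      ext
      show (φ a : A) ^ k = 1
      show (a ^ p) ^ k = 1
      rw [← pow_mul, mul_comm p k, hk, hexp]
    -- injection of torsion of range into torsion of A
    have hj : ∀ q : ℕ, ∃ j : {b : φ.range // b ^ q = 1} → {a : A // a ^ q = 1},
        Function.Injective j := by
      intro q
      refine ⟨fun b => ⟨(b.1 : A), ?_⟩, ?_⟩
      · have := b.2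
        rw [Subtype.ext_iff] at this
        simpa using this
      · intro b b' h
        rw [Subtype.mk.injEq, ← Subtype.ext_iff, ← Subtype.ext_iff] at h
        exact h
    have hfinB : ∀ q : ℕ, q.Prime → q ∣ k → Finite {b : φ.range // b ^ q = 1} := by
      intro q hq hqk
      obtain ⟨j, hjinj⟩ := hj q
      haveI := hfin q hq (hqk.trans hkdvd)
      exact Finite.of_injective j hjinj
    obtain ⟨finB, cardB⟩ := ih k hkm φ.range hk0 hexpB hfinB
    -- kernel
    have eK : {a : A // a ^ p = 1} ≃ φ.ker := by
      refine Equiv.subtypeEquivRight fun a => ?_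
      simp [MonoidHom.mem_ker, hφ, powMonoidHom_apply]
    haveI finKsub := hfin p hp hpd
    haveI finK : Finite φ.ker := Finite.of_equiv _ eK
    have e2 : (A ⧸ φ.ker) ≃* φ.range := QuotientGroup.quotientKerEquivRange φ
    haveI finQ : Finite (A ⧸ φ.ker) := Finite.of_equiv _ e2.toEquiv.symm
    have e1 : A ≃ (A ⧸ φ.ker) × φ.ker := Subgroup.groupEquivQuotientProdSubgroup
    haveI finA : Finite A := Finite.of_equiv _ e1.symm
    refine ⟨finA, ?_⟩
    have cardA : Nat.card A = Nat.card φ.range * Nat.card φ.ker := by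
      rw [Nat.card_congr e1, Nat.card_prod, Nat.card_congr e2.toEquiv]
    -- bound card B
    have cardB2 : Nat.card φ.range ≤
        k.factorization.prod fun q e => Nat.card {a : A // a ^ q = 1} ^ e := by
      refine cardB.trans ?_
      rw [Finsupp.prod, Finsupp.prod]
      refine Finset.prod_le_prod' fun q hq => ?_
      have hq' : q.Prime := Nat.prime_of_mem_primeFactors (by
        rwa [← Nat.support_factorization])
      have hqk : q ∣ k := Nat.dvd_of_mem_primeFactors (by rwa [← Nat.support_factorization])
      obtain ⟨j, hjinj⟩ := hj q
      haveI := hfin q hq' (hqk.trans hkdvd)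
      exact Nat.pow_le_pow_left (Nat.card_le_card_of_injective j hjinj) _
    have cardKeq : Nat.card φ.ker = Nat.card {a : A // a ^ p = 1} := (Nat.card_congr eK).symm
    have hsplit : m.factorization = k.factorization + Finsupp.single p 1 := by
      rw [← hk, Nat.factorization_mul hk0.ne' hp.pos.ne', hp.factorization]
    calc Nat.card A = Nat.card φ.range * Nat.card φ.ker := cardA
      _ ≤ (k.factorization.prod fun q e => Nat.card {a : A // a ^ q = 1} ^ e) *
            Nat.card {a : A // a ^ p = 1} := by
          rw [cardKeq]; exact Nat.mul_le_mul_right _ cardB2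
      _ = m.factorization.prod fun q e => Nat.card {a : A // a ^ q = 1} ^ e := by
          rw [hsplit, Finsupp.prod_add_index' (fun q => pow_zero _) (fun q e1 e2 => pow_add _ _ _)]
          simp [Finsupp.prod_single_index]

theorem mult_zmod_pow_self (n : ℕ) (y : Multiplicative (ZMod n)) : y ^ n = 1 := by
  have h : n • y.toAdd = 0 := by
    rw [nsmul_eq_mul, ZMod.natCast_self, zero_mul]
  apply Multiplicative.toAdd.injective
  rw [toAdd_pow, h]
  rfl

theorem card_torsion_le {n p : ℕ} [NeZero n] (hp : p.Prime) (hpn : p ∣ n) :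
    Nat.card {y : Multiplicative (ZMod n) // y ^ p = 1} ≤ p := by
  have hn : 0 < n := Nat.pos_of_ne_zero (NeZero.ne n)
  set d := n / p with hddef
  have hd : d * p = n := Nat.div_mul_cancel hpn
  have hd0 : 0 < d := Nat.div_pos (Nat.le_of_dvd hn hpn) hp.pos
  have hmap : ∀ y : Multiplicative (ZMod n), y ^ p = 1 → d ∣ (y.toAdd).val := by
    intro y hy
    have h0 : p • y.toAdd = 0 := by
      have := congrArg Multiplicative.toAdd hy
      rwa [toAdd_pow, toAdd_one] at this
    have h1 : ((p * (y.toAdd).val : ℕ) : ZMod n) = 0 := by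
      push_cast
      rw [ZMod.natCast_val, ZMod.cast_id, ← nsmul_eq_mul, h0]
    have h2 : n ∣ p * (y.toAdd).val := (ZMod.natCast_eq_zero_iff _ n).mp h1
    have h3 : d * p ∣ (y.toAdd).val * p := by
      rw [hd, mul_comm]; exact h2
    exact (mul_dvd_mul_iff_right (c := p) hp.pos.ne').mp h3
  have hinj : Function.Injective (fun y : {y : Multiplicative (ZMod n) // y ^ p = 1} =>
      (((y.1.toAdd).val / d : ℕ) : ZMod p)) := by
    intro y₁ y₂ h
    have hdv₁ := hmap y₁.1 y₁.2
    have hdv₂ := hmap y₂.1 y₂.2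
    have hlt : ∀ y : Multiplicative (ZMod n), (y.toAdd).val / d < p := by
      intro y
      rw [Nat.div_lt_iff_lt_mul hd0, mul_comm, hd]
      exact ZMod.val_lt _
    have h' : (y₁.1.toAdd).val / d = (y₂.1.toAdd).val / d := by
      have := congrArg ZMod.val h
      rwa [ZMod.val_cast_of_lt (hlt y₁.1), ZMod.val_cast_of_lt (hlt y₂.1)] at this
    have hval : (y₁.1.toAdd).val = (y₂.1.toAdd).val := by
      rw [← Nat.div_mul_cancel hdv₁, ← Nat.div_mul_cancel hdv₂, h']
    have : y₁.1.toAdd = y₂.1.toAdd := ZMod.val_injective n hval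
    exact Subtype.ext (Multiplicative.toAdd.injective this)
  haveI : NeZero p := ⟨hp.pos.ne'⟩
  calc Nat.card {y : Multiplicative (ZMod n) // y ^ p = 1}
      ≤ Nat.card (ZMod p) := Nat.card_le_card_of_injective _ hinj
    _ = p := Nat.card_zmod p

section OpenHoms

variable (G : Type*) [Group G] [TopologicalSpace G] [IsTopologicalGroup G]

/-- The subgroup of homomorphisms `G →* Multiplicative (ZMod n)` with open kernel. -/
def openHoms (n : ℕ) : Subgroup (G →* Multiplicative (ZMod n)) where
  carrier := {f | IsOpen ((f.ker : Subgroup G) : Set G)}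
  one_mem' := by
    have h : (((1 : G →* Multiplicative (ZMod n)).ker : Subgroup G) : Set G) = Set.univ := by
      ext g; simp [MonoidHom.mem_ker]
    simp only [Set.mem_setOf_eq, h]
    exact isOpen_univ
  mul_mem' := by
    intro f g hf hg
    simp only [Set.mem_setOf_eq] at *
    refine Subgroup.isOpen_mono (H₁ := f.ker ⊓ g.ker) ?_ ?_
    · intro x hx
      rw [Subgroup.mem_inf] at hx
      simp only [MonoidHom.mem_ker] at hx ⊢
      rw [MonoidHom.mul_apply, hx.1, hx.2, one_mul]
    · rw [Subgroup.coe_inf]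
      exact hf.inter hg
  inv_mem' := by
    intro f hf
    simp only [Set.mem_setOf_eq] at *
    have h : (f⁻¹).ker = f.ker := by
      ext g
      simp only [MonoidHom.mem_ker, MonoidHom.inv_apply, inv_eq_one]
    rwa [h]

variable {G}

theorem ker_mem_cyclicKernels {n p : ℕ} [NeZero n] (hp : p.Prime) (hpn : p ∣ n)
    {h : G →* Multiplicative (ZMod n)} (hopen : IsOpen ((h.ker : Subgroup G) : Set G))
    (hne : h ≠ 1) (htor : h ^ p = 1) : h.ker ∈ cyclicKernels G p := by
  haveI : Fact p.Prime := ⟨hp⟩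
  -- the torsion subgroup
  set T : Subgroup (Multiplicative (ZMod n)) :=
    { carrier := {y | y ^ p = 1}
      one_mem' := one_pow p
      mul_mem' := fun {a b} ha hb => by
        simp only [Set.mem_setOf_eq] at *
        rw [mul_pow, ha, hb, one_mul]
      inv_mem' := fun {a} ha => by
        simp only [Set.mem_setOf_eq] at *
        rw [inv_pow, ha, inv_one] } with hTdef
  have hrange : h.range ≤ T := by
    rintro _ ⟨g, rfl⟩
    show (h g) ^ p = 1
    rw [← MonoidHom.pow_apply, htor, MonoidHom.one_apply]
  -- card of T
  have hTcard : Nat.card T ≤ p := by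
    have e : T ≃ {y : Multiplicative (ZMod n) // y ^ p = 1} :=
      Equiv.subtypeEquivRight fun y => Iff.rfl
    rw [Nat.card_congr e]
    exact card_torsion_le hp hpn
  -- h.range has cardinality p
  obtain ⟨g0, hg0⟩ : ∃ g, h g ≠ 1 := by
    by_contra hc
    push_neg at hc
    exact hne (MonoidHom.ext fun g => hc g)
  have hordp : orderOf (⟨h g0, ⟨g0, rfl⟩⟩ : h.range) = p := by
    refine orderOf_eq_prime ?_ ?_
    · apply Subtype.ext
      show (h g0) ^ p = 1
      rw [← MonoidHom.pow_apply, htor, MonoidHom.one_apply]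
    · intro hc
      exact hg0 (congrArg Subtype.val hc)
  haveI : Finite T := Subtype.finite
  haveI : Finite h.range := Subtype.finite
  have hpd : p ∣ Nat.card h.range := hordp ▸ orderOf_dvd_natCard _
  have hle : Nat.card h.range ≤ p :=
    le_trans (Nat.le_of_dvd Nat.card_pos (Subgroup.card_dvd_of_le hrange)) hTcard
  have hcard : Nat.card h.range = p :=
    le_antisymm hle (Nat.le_of_dvd Nat.card_pos hpd)
  have hcy : IsCyclic h.range := isCyclic_of_prime_card hcard
  obtain ⟨e⟩ : Nonempty (Multiplicative (ZMod p) ≃* h.range) := by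
    have e0 := zmodCyclicMulEquiv hcy
    rw [hcard] at e0
    exact ⟨e0⟩
  set f : G →* Multiplicative (ZMod p) := e.symm.toMonoidHom.comp h.rangeRestrict with hfdef
  have hfsurj : Function.Surjective f :=
    e.symm.surjective.comp h.rangeRestrict_surjective
  have hfker : f.ker = h.ker := by
    ext g
    simp only [hfdef, MonoidHom.mem_ker, MonoidHom.comp_apply, MulEquiv.coe_toMonoidHom]
    rw [MulEquiv.map_eq_one_iff]
    rw [← MonoidHom.mem_ker, MonoidHom.ker_rangeRestrict, MonoidHom.mem_ker]
  exact ⟨Subgroup.isClosed_of_isOpen _ hopen, f, hfsurj, hfker⟩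

end OpenHoms


theorem mem_openHoms_iff {G : Type*} [Group G] [TopologicalSpace G] [IsTopologicalGroup G]
    {n : ℕ} {f : G →* Multiplicative (ZMod n)} :
    f ∈ openHoms G n ↔ IsOpen ((f.ker : Subgroup G) : Set G) := Iff.rfl

section Count

variable {G : Type*} [Group G] [TopologicalSpace G] [IsTopologicalGroup G]

theorem torsion_openHoms_bound {n p : ℕ} [NeZero n] (hp : p.Prime) (hpn : p ∣ n)
    (hK : (cyclicKernels G p).Finite) :
    Finite {a : ↥(openHoms G n) // a ^ p = 1} ∧
      Nat.card {a : ↥(openHoms G n) // a ^ p = 1} ≤ p ^ Nat.card (cyclicKernels G p) := by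
  haveI : Fact p.Prime := ⟨hp⟩
  haveI : Finite ↥(cyclicKernels G p) := hK.to_subtype
  -- choose an element outside each kernel
  have hx : ∀ M : ↥(cyclicKernels G p), ∃ g : G, g ∉ M.1 := by
    rintro ⟨M, hMc, f, hfs, hfk⟩
    by_contra hc
    push_neg at hc
    obtain ⟨y, hy⟩ := exists_ne (1 : Multiplicative (ZMod p))
    obtain ⟨g, rfl⟩ := hfs y
    exact hy (by rw [← MonoidHom.mem_ker, hfk]; exact hc g)
  choose x hxmem using hx
  -- the injection
  set Ψ : {a : ↥(openHoms G n) // a ^ p = 1} →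
      (↥(cyclicKernels G p) → {y : Multiplicative (ZMod n) // y ^ p = 1}) :=
    fun a M => ⟨(a.1 : G →* Multiplicative (ZMod n)) (x M), by
      have h2 : ((a.1 : G →* Multiplicative (ZMod n))) ^ p = 1 := by
        have := congrArg (Subtype.val) a.2
        simpa using this
      rw [← MonoidHom.pow_apply, h2, MonoidHom.one_apply]⟩ with hΨdef
  have hΨinj : Function.Injective Ψ := by
    intro a b hab
    by_contra hne
    set hdiv : ↥(openHoms G n) := a.1 * (b.1)⁻¹ with hdivdef
    have hdivcoe : (hdiv : G →* Multiplicative (ZMod n)) =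
        (a.1 : G →* Multiplicative (ZMod n)) * ((b.1 : G →* Multiplicative (ZMod n)))⁻¹ := rfl
    have hdivne : (hdiv : G →* Multiplicative (ZMod n)) ≠ 1 := by
      intro hc
      rw [hdivcoe, mul_inv_eq_one] at hc
      exact hne (Subtype.ext (Subtype.ext hc))
    have hdivtor : (hdiv : G →* Multiplicative (ZMod n)) ^ p = 1 := by
      have h1 : hdiv ^ p = 1 := by
        rw [hdivdef, mul_pow, inv_pow, a.2, b.2, inv_one, mul_one]
      have := congrArg (Subtype.val) h1
      simpa using this
    have hopen : IsOpen (((hdiv : G →* Multiplicative (ZMod n)).ker : Subgroup G) : Set G) :=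
      mem_openHoms_iff.mp hdiv.2
    set M : ↥(cyclicKernels G p) :=
      ⟨(hdiv : G →* Multiplicative (ZMod n)).ker,
        ker_mem_cyclicKernels hp hpn hopen hdivne hdivtor⟩ with hMdef
    have hev : (a.1 : G →* Multiplicative (ZMod n)) (x M) =
        (b.1 : G →* Multiplicative (ZMod n)) (x M) := by
      have := congrFun hab M
      simpa [hΨdef, Subtype.ext_iff] using this
    have : x M ∈ (hdiv : G →* Multiplicative (ZMod n)).ker := by
      rw [MonoidHom.mem_ker, hdivcoe, MonoidHom.mul_apply, MonoidHom.inv_apply, hev,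
        mul_inv_cancel]
    exact hxmem M this
  haveI finT : Finite {y : Multiplicative (ZMod n) // y ^ p = 1} := Subtype.finite
  refine ⟨Finite.of_injective Ψ hΨinj, ?_⟩
  calc Nat.card {a : ↥(openHoms G n) // a ^ p = 1}
      ≤ Nat.card (↥(cyclicKernels G p) → {y : Multiplicative (ZMod n) // y ^ p = 1}) :=
        Nat.card_le_card_of_injective Ψ hΨinj
    _ = Nat.card {y : Multiplicative (ZMod n) // y ^ p = 1} ^ Nat.card (cyclicKernels G p) :=
        Nat.card_fun
    _ ≤ p ^ Nat.card (cyclicKernels G p) :=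
        Nat.pow_le_pow_left (card_torsion_le hp hpn) _

end Count

/-- If, for every prime `p` dividing `n`, the number `I_G(p)` of closed normal subgroups of the
profinite group `G` with cyclic quotient of order `p` is finite, then
`I_G(n) ≤ 2 ^ (n ^ s)` where `s = ∑_{p ∣ n prime} I_G(p)`; in particular `I_G(n)` is finite. -/
theorem stmt5 (G : Type*) [Group G] [TopologicalSpace G] [IsTopologicalGroup G]
    [CompactSpace G] [T2Space G] [TotallyDisconnectedSpace G]
    (n : ℕ) (hn : 0 < n) (hfin : ∀ p : ℕ, p.Prime → p ∣ n → (cyclicKernels G p).Finite) :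
    (cyclicKernels G n).Finite ∧
      Nat.card (cyclicKernels G n) ≤
        2 ^ n ^ (∑ p ∈ n.primeFactors, Nat.card (cyclicKernels G p)) := by
  haveI : NeZero n := ⟨hn.ne'⟩
  -- the injection into open-kernel homs
  have hθ : ∀ N : ↥(cyclicKernels G n), ∃ a : ↥(openHoms G n),
      (a : G →* Multiplicative (ZMod n)).ker = N.1 := by
    rintro ⟨N, hNc, f, hfs, hfk⟩
    haveI : f.ker.FiniteIndex := by
      constructor
      rw [Subgroup.index_ker, MonoidHom.range_eq_top.mpr hfs]
      rw [Nat.card_congr Subgroup.topEquiv.toEquiv]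
      simp [Nat.card_zmod, hn.ne']
    have hopen : IsOpen ((f.ker : Subgroup G) : Set G) :=
      Subgroup.isOpen_of_isClosed_of_finiteIndex _ (hfk ▸ hNc)
    exact ⟨⟨f, mem_openHoms_iff.mpr hopen⟩, hfk⟩
  choose θ hθk using hθ
  have hθinj : Function.Injective θ := by
    intro N N' h
    apply Subtype.ext
    rw [← hθk N, ← hθk N', h]
  -- exponent
  have hexp : ∀ a : ↥(openHoms G n), a ^ n = 1 := by
    intro a
    apply Subtype.ext
    have : (a : G →* Multiplicative (ZMod n)) ^ n = 1 := by
      ext g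
      rw [MonoidHom.pow_apply, MonoidHom.one_apply, mult_zmod_pow_self]
    simpa using this
  have hfin' : ∀ p : ℕ, p.Prime → p ∣ n → Finite {a : ↥(openHoms G n) // a ^ p = 1} :=
    fun p hp hpd => (torsion_openHoms_bound hp hpd (hfin p hp hpd)).1
  obtain ⟨finA, cardA⟩ := torsion_card_bound' n ↥(openHoms G n) hn hexp hfin'
  haveI : Finite ↥(cyclicKernels G n) := Finite.of_injective θ hθinj
  refine ⟨Set.finite_coe_iff.mp inferInstance, ?_⟩
  have h2 : (n.factorization.prod fun q e =>
        Nat.card {a : ↥(openHoms G n) // a ^ q = 1} ^ e)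
      ≤ n ^ (∑ p ∈ n.primeFactors, Nat.card (cyclicKernels G p)) := by
    rw [Finsupp.prod, Nat.support_factorization, ← Finset.prod_pow_eq_pow_sum]
    refine Finset.prod_le_prod' fun q hq => ?_
    have hq' : q.Prime := Nat.prime_of_mem_primeFactors hq
    have hqd : q ∣ n := Nat.dvd_of_mem_primeFactors hq
    calc Nat.card {a : ↥(openHoms G n) // a ^ q = 1} ^ n.factorization q
        ≤ (q ^ Nat.card (cyclicKernels G q)) ^ n.factorization q :=
          Nat.pow_le_pow_left (torsion_openHoms_bound hq' hqd (hfin q hq' hqd)).2 _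
      _ = (q ^ n.factorization q) ^ Nat.card (cyclicKernels G q) := by
          rw [← pow_mul, ← pow_mul, mul_comm]
      _ ≤ n ^ Nat.card (cyclicKernels G q) :=
          Nat.pow_le_pow_left (Nat.le_of_dvd hn (Nat.ordProj_dvd n q)) _
  calc Nat.card (cyclicKernels G n)
      ≤ Nat.card ↥(openHoms G n) := Nat.card_le_card_of_injective θ hθinj
    _ ≤ n ^ (∑ p ∈ n.primeFactors, Nat.card (cyclicKernels G p)) := cardA.trans h2
    _ ≤ 2 ^ n ^ (∑ p ∈ n.primeFactors, Nat.card (cyclicKernels G p)) :=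
        Nat.lt_two_pow_self.le
end

section
/- Let G be a profinite group such that for every prime p, G has a basis of neighborhoods of the identity consisting of open normal subgroups U with finite p-rank r_p(U). Then every open subgroup H of G has finite p-rank for every prime p, and consequently I_H(n) is finite for every open subgroup H ≤ G and every n ∈ ℕ. -/
/-- `M_p(G)`, the intersection of all closed normal subgroups of `G` with quotient cyclic of
order `p`.  The `p`-rank of `G` is finite exactly when `M_p(G)` has finite index. -/
def Mp (G : Type*) [Group G] [TopologicalSpace G] (p : ℕ) : Subgroup G :=
  sInf (cyclicKernels G p)

section Aux

variable {Γ : Type*} [Group Γ] [TopologicalSpace Γ] [IsTopologicalGroup Γ]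

/-- A subgroup containing a closed finite-index subgroup is closed. -/
lemma aux_isClosed_of_le {K L : Subgroup Γ} (hKL : K ≤ L) (hK : IsClosed (K : Set Γ))
    (hKi : K.index ≠ 0) : IsClosed (L : Set Γ) := by
  haveI : K.FiniteIndex := ⟨hKi⟩
  exact L.isClosed_of_isOpen (Subgroup.isOpen_mono hKL
    (K.isOpen_of_isClosed_of_finiteIndex hK))

lemma aux_card_mult_zmod (k : ℕ) : Nat.card (Multiplicative (ZMod k)) = k :=
  (Nat.card_congr Multiplicative.toAdd).trans (Nat.card_zmod k)

/-- If `δ` is a homomorphism with closed kernel whose range has order `1` or `p`,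
then `Mp Γ p ≤ ker δ`. -/
lemma aux_mp_le_ker {A : Type*} [Group A] {p : ℕ} (hp : p.Prime) (δ : Γ →* A)
    (hcl : IsClosed ((δ.ker : Subgroup Γ) : Set Γ))
    (hcard : Nat.card δ.range = 1 ∨ Nat.card δ.range = p) : Mp Γ p ≤ δ.ker := by
  rcases hcard with h1 | hP
  · have hbot : δ.range = ⊥ := Subgroup.card_eq_one.mp h1
    intro x _
    have hx : δ x ∈ δ.range := ⟨x, rfl⟩
    rw [hbot, Subgroup.mem_bot] at hx
    exact hx
  · haveI : Fact p.Prime := ⟨hp⟩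
    let e : δ.range ≃* Multiplicative (ZMod p) :=
      mulEquivOfPrimeCardEq hP (aux_card_mult_zmod p)
    let f : Γ →* Multiplicative (ZMod p) := e.toMonoidHom.comp δ.rangeRestrict
    have hfs : Function.Surjective f := e.surjective.comp δ.rangeRestrict_surjective
    have hker : f.ker = δ.ker := by
      have h1 : f.ker = δ.rangeRestrict.ker := by
        ext x
        simp [f, MonoidHom.mem_ker, MulEquiv.map_eq_one_iff, Subtype.ext_iff]
      rw [h1, MonoidHom.ker_rangeRestrict]
    have hmem : δ.ker ∈ cyclicKernels Γ p := ⟨hcl, f, hfs, hker⟩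
    exact sInf_le hmem

/-- The set of homomorphisms `Γ →* Multiplicative (ZMod n)` with closed kernel is finite,
provided all the `Mp Γ p` have finite index. -/
lemma aux_homs_finite (hMp : ∀ p : ℕ, p.Prime → (Mp Γ p).index ≠ 0) :
    ∀ n : ℕ, 0 < n →
      {f : Γ →* Multiplicative (ZMod n) | IsClosed ((f.ker : Subgroup Γ) : Set Γ)}.Finite := by
  intro n
  induction n using Nat.strong_induction_on with
  | _ n ih =>
    intro hn
    haveI : NeZero n := ⟨hn.ne'⟩
    rcases eq_or_ne n 1 with rfl | hn1
    · haveI : Subsingleton (Multiplicative (ZMod 1)) :=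
        ⟨fun a b => Multiplicative.toAdd.injective (Subsingleton.elim _ _)⟩
      haveI : Subsingleton (Γ →* Multiplicative (ZMod 1)) :=
        ⟨fun f g => MonoidHom.ext fun x => Subsingleton.elim _ _⟩
      exact Set.subsingleton_of_subsingleton.finite
    · set p := n.minFac with hpdef
      have hp : p.Prime := Nat.minFac_prime hn1
      have hpd : p ∣ n := n.minFac_dvd
      obtain ⟨m, hm⟩ := hpd
      have hm0 : 0 < m := by
        rcases Nat.eq_zero_or_pos m with h0 | h
        · rw [h0, Nat.mul_zero] at hm; omega
        · exact h
      have hmn : m < n := by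
        have h2 := hp.two_le
        have : m < p * m := by
          have := Nat.mul_lt_mul_of_lt_of_le (show 1 < p from h2) (le_refl m) hm0
          simpa using this
        omega
      have hmd : m ∣ n := ⟨p, by rw [hm]; ring⟩
      haveI : NeZero m := ⟨hm0.ne'⟩
      haveI hfinN : Finite (Multiplicative (ZMod n)) :=
        Finite.of_equiv (ZMod n) Multiplicative.ofAdd
      let ψ : Multiplicative (ZMod n) →* Multiplicative (ZMod m) :=
        AddMonoidHom.toMultiplicative (ZMod.castHom hmd (ZMod m)).toAddMonoidHom
      have hψ : ∀ a : Multiplicative (ZMod n), ψ a = 1 → a ^ p = 1 := by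
        intro a ha
        set b : ZMod n := Multiplicative.toAdd a with hb
        have ha' : ((b.val : ℕ) : ZMod m) = 0 := by
          have h0 : (ZMod.castHom hmd (ZMod m)) b = 0 := ha
          rwa [ZMod.castHom_apply, ← ZMod.natCast_val] at h0
        have hdvd : m ∣ b.val := (ZMod.natCast_eq_zero_iff _ _).mp ha'
        obtain ⟨k, hk⟩ := hdvd
        apply Multiplicative.toAdd.injective
        rw [toAdd_pow, toAdd_one, ← hb]
        have hcalc : (p : ℕ) • b = ((p * b.val : ℕ) : ZMod n) := by
          rw [Nat.cast_mul, nsmul_eq_mul, ZMod.natCast_zmod_val]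
        rw [hcalc, hk, ← Nat.mul_assoc, ← hm, Nat.cast_mul, ZMod.natCast_self, zero_mul]
      have hker_index : ∀ f : Γ →* Multiplicative (ZMod n), f.ker.index ≠ 0 := by
        intro f
        rw [Subgroup.index_ker]
        exact Nat.card_pos.ne'
      have hker_le : ∀ f : Γ →* Multiplicative (ZMod n), f.ker ≤ (ψ.comp f).ker := by
        intro f x hx
        have hx1 : f x = 1 := hx
        show ψ (f x) = 1
        rw [hx1, map_one]
      set S := {f : Γ →* Multiplicative (ZMod n) | IsClosed ((f.ker : Subgroup Γ) : Set Γ)}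
        with hS
      have hSm := ih m hmn hm0
      have hsub : S ⊆ ⋃ g ∈ {f : Γ →* Multiplicative (ZMod m) |
          IsClosed ((f.ker : Subgroup Γ) : Set Γ)}, {f | f ∈ S ∧ ψ.comp f = g} := by
        intro f hf
        refine Set.mem_biUnion ?_ ⟨hf, rfl⟩
        exact aux_isClosed_of_le (hker_le f) hf (hker_index f)
      refine Set.Finite.subset (Set.Finite.biUnion hSm ?_) hsub
      intro g _
      rcases Set.eq_empty_or_nonempty {f | f ∈ S ∧ ψ.comp f = g} with he | ⟨f₀, hf₀S, hf₀g⟩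
      · rw [he]; exact Set.finite_empty
      · have hMpp := hMp p hp
        haveI : (Mp Γ p).FiniteIndex := ⟨hMpp⟩
        have hT : {δ : Γ →* Multiplicative (ZMod n) | Mp Γ p ≤ δ.ker}.Finite := by
          have hinj : Set.InjOn
              (fun δ : Γ →* Multiplicative (ZMod n) => fun q : Γ ⧸ Mp Γ p => δ q.out)
              {δ : Γ →* Multiplicative (ZMod n) | Mp Γ p ≤ δ.ker} := by
            intro δ hδ δ' hδ' hfun
            ext x
            set y := ((QuotientGroup.mk x : Γ ⧸ Mp Γ p)).out with hy
            have hq : QuotientGroup.mk y = (QuotientGroup.mk x : Γ ⧸ Mp Γ p) :=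
              Quotient.out_eq _
            have hmem : y⁻¹ * x ∈ Mp Γ p := QuotientGroup.eq.mp hq
            have key : ∀ ρ : Γ →* Multiplicative (ZMod n), Mp Γ p ≤ ρ.ker → ρ x = ρ y := by
              intro ρ hρ
              have h1 : ρ (y⁻¹ * x) = 1 := hρ hmem
              calc ρ x = ρ (y * (y⁻¹ * x)) := by rw [mul_inv_cancel_left]
                _ = ρ y * ρ (y⁻¹ * x) := map_mul ρ _ _
                _ = ρ y := by rw [h1, mul_one]
            rw [key δ hδ, key δ' hδ']
            exact congrFun hfun (QuotientGroup.mk x)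
          exact Set.Finite.of_finite_image (Set.toFinite _) hinj
        have himg : (fun f : Γ →* Multiplicative (ZMod n) => f / f₀) ''
            {f | f ∈ S ∧ ψ.comp f = g} ⊆ {δ | Mp Γ p ≤ δ.ker} := by
          rintro δ ⟨f, ⟨hfS, hfg⟩, rfl⟩
          have hpow : ∀ x : Γ, ((f / f₀) x) ^ p = 1 := by
            intro x
            apply hψ
            have h1 : ψ (f x) = ψ (f₀ x) := by
              have := congrArg (fun h : Γ →* Multiplicative (ZMod m) => h x)
                (hfg.trans hf₀g.symm)
              exact this
            rw [MonoidHom.div_apply, map_div, h1, div_self']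
          have hcl : IsClosed (((f / f₀).ker : Subgroup Γ) : Set Γ) := by
            refine aux_isClosed_of_le (K := f.ker ⊓ f₀.ker) ?_ ?_ ?_
            · intro x hx
              obtain ⟨h1, h2⟩ := hx
              have h1' : f x = 1 := h1
              have h2' : f₀ x = 1 := h2
              show (f / f₀) x = 1
              rw [MonoidHom.div_apply, h1', h2', div_one]
            · rw [Subgroup.coe_inf]
              exact IsClosed.inter hfS hf₀S
            · exact Subgroup.index_inf_ne_zero (hker_index f) (hker_index f₀)
          have hcard : Nat.card (f / f₀).range = 1 ∨ Nat.card (f / f₀).range = p := by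
            obtain ⟨γ, hγ⟩ := (Subgroup.isCyclic (f / f₀).range).exists_generator
            have hcard' : Nat.card (f / f₀).range = orderOf γ :=
              (orderOf_eq_card_of_forall_mem_zpowers hγ).symm
            have hγp : γ ^ p = 1 := by
              obtain ⟨x, hx⟩ := γ.2
              apply Subtype.ext
              rw [SubmonoidClass.coe_pow, OneMemClass.coe_one, ← hx]
              exact hpow x
            have hdvd : orderOf γ ∣ p := orderOf_dvd_of_pow_eq_one hγp
            rw [hcard']
            exact (hp.eq_one_or_self_of_dvd _ hdvd)
          exact aux_mp_le_ker hp (f / f₀) hcl hcard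
        have hinj2 : Set.InjOn (fun f : Γ →* Multiplicative (ZMod n) => f / f₀)
            {f | f ∈ S ∧ ψ.comp f = g} := by
          intro f hf f' hf' hff
          ext x
          have := congrArg (fun h : Γ →* Multiplicative (ZMod n) => h x) hff
          simp only [MonoidHom.div_apply] at this
          exact div_left_injective (G := Multiplicative (ZMod n)) this
        exact Set.Finite.of_finite_image (hT.subset himg) hinj2

end Aux

/-- If for every prime `p` the profinite group `G` has a basis of neighborhoods of `1`
consisting of open normal subgroups of finite `p`-rank, then every open subgroup `H` of `G`
has finite `p`-rank for all primes `p`, and consequently `I_H(n)` is finite for all `n`. -/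
theorem stmt7 (G : Type*) [Group G] [TopologicalSpace G] [IsTopologicalGroup G]
    [CompactSpace G] [T2Space G] [TotallyDisconnectedSpace G]
    (hbasis : ∀ p : ℕ, p.Prime → ∀ W ∈ nhds (1 : G), ∃ U : Subgroup G,
      U.Normal ∧ IsOpen (U : Set G) ∧ (U : Set G) ⊆ W ∧ (Mp U p).index ≠ 0) :
    ∀ H : Subgroup G, IsOpen (H : Set G) →
      (∀ p : ℕ, p.Prime → (Mp H p).index ≠ 0) ∧
        ∀ n : ℕ, 0 < n → (cyclicKernels H n).Finite := by
  intro H hH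
  have part1 : ∀ p : ℕ, p.Prime → (Mp H p).index ≠ 0 := by
    intro p hp
    haveI : NeZero p := ⟨hp.pos.ne'⟩
    obtain ⟨U, hUn, hUo, hUsub, hUMp⟩ := hbasis p hp H (hH.mem_nhds (one_mem H))
    have hUH : U ≤ H := hUsub
    haveI : Finite (G ⧸ U) := Subgroup.quotient_finite_of_isOpen U hUo
    have hUidx : U.index ≠ 0 := Subgroup.index_ne_zero_of_finite
    have hrel : (U.subgroupOf H).index ≠ 0 := by
      intro h0
      have hmul := Subgroup.relIndex_mul_index hUH
      have : U.relIndex H = (U.subgroupOf H).index := rfl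
      rw [this, h0, zero_mul] at hmul
      exact hUidx hmul.symm
    set K : Subgroup H := (Mp U p).map (Subgroup.inclusion hUH) with hK
    have hKidx : K.index ≠ 0 := by
      have hkerb : (Subgroup.inclusion hUH).ker = ⊥ :=
        (Subgroup.inclusion hUH).ker_eq_bot_iff.mpr (Subgroup.inclusion_injective hUH)
      rw [hK, Subgroup.index_map, hkerb, sup_bot_eq, Subgroup.inclusion_range]
      exact Nat.mul_ne_zero hUMp hrel
    have hKle : K ≤ Mp H p := by
      rintro x hx
      obtain ⟨y, hy, rfl⟩ := hx
      rw [Mp, Subgroup.mem_sInf]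
      intro N hN
      obtain ⟨hNcl, f, hfs, hfk⟩ := hN
      have hcont : Continuous (Subgroup.inclusion hUH : U → H) :=
        Continuous.subtype_mk continuous_subtype_val _
      set g : ↥U →* Multiplicative (ZMod p) := f.comp (Subgroup.inclusion hUH) with hg
      have hgcl : IsClosed ((g.ker : Subgroup U) : Set U) := by
        have hset : ((g.ker : Subgroup U) : Set U) =
            (Subgroup.inclusion hUH) ⁻¹' ((f.ker : Subgroup H) : Set H) := by
          ext z
          simp [hg, MonoidHom.mem_ker]
        rw [hset]
        refine IsClosed.preimage hcont ?_
        rw [hfk]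
        exact hNcl
      have hcard : Nat.card g.range = 1 ∨ Nat.card g.range = p := by
        have hd : Nat.card g.range ∣ p := by
          have hdd := Subgroup.card_subgroup_dvd_card g.range
          rwa [aux_card_mult_zmod p] at hdd
        exact hp.eq_one_or_self_of_dvd _ hd
      have hle : Mp U p ≤ g.ker := aux_mp_le_ker hp g hgcl hcard
      have hgy : g y = 1 := hle hy
      have : f (Subgroup.inclusion hUH y) = 1 := hgy
      rw [← hfk]
      exact this
    intro h0
    have hdvd : (Mp H p).index ∣ K.index := Subgroup.index_dvd_of_le hKle
    rw [h0] at hdvd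
    exact hKidx (Nat.eq_zero_of_zero_dvd hdvd)
  refine ⟨part1, fun n hn => ?_⟩
  have hfin := aux_homs_finite part1 n hn
  have hsub : cyclicKernels (↥H) n ⊆ (fun f : ↥H →* Multiplicative (ZMod n) => f.ker) ''
      {f : ↥H →* Multiplicative (ZMod n) | IsClosed ((f.ker : Subgroup H) : Set H)} := by
    rintro N ⟨hNcl, f, hfs, hfk⟩
    refine ⟨f, ?_, hfk⟩
    show IsClosed ((f.ker : Subgroup H) : Set H)
    rw [hfk]
    exact hNcl
  exact Set.Finite.subset (hfin.image _) hsub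
end

section
/- Any product G = ∏_{i∈I} G_i of finite perfect groups (with the product topology) satisfies: for every open subgroup H ≤ G and every n ∈ ℕ, H has only finitely many closed normal subgroups N with H/N cyclic of order n. -/
/-- Auxiliary: any hom from a "finitely supported, trivial on `J`" element to a commutative
group vanishes, given each `G i` is perfect. -/
theorem aux_key {ι : Type*} {G : ι → Type*} [∀ i, Group (G i)]
    (hperf : ∀ i, commutator (G i) = ⊤) {A : Type*} [CommGroup A]
    (J : Finset ι) (H : Subgroup (∀ i, G i))
    (hK : ∀ z : ∀ i, G i, (∀ i ∈ J, z i = 1) → z ∈ H)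
    (f : H →* A) :
    ∀ S : Finset ι, ∀ z : ∀ i, G i, (∀ i, i ∉ S → z i = 1) → (∀ i ∈ J, z i = 1) →
      ∀ hz : z ∈ H, f ⟨z, hz⟩ = 1 := by
  classical
  intro S
  induction S using Finset.induction_on with
  | empty =>
    intro z h1 _ hz
    have : z = 1 := funext fun i => h1 i (Finset.notMem_empty i)
    subst this
    exact f.map_one
  | @insert a S ha IH =>
    intro z h1 h2 hz
    set e : ∀ i, G i := Pi.mulSingle a (z a) with he_def
    set z' : ∀ i, G i := Function.update z a 1 with hz'_def
    have hzJ' : ∀ i ∈ J, z' i = 1 := by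
      intro i hi
      by_cases h : i = a
      · subst h; simp [hz'_def]
      · simp [hz'_def, Function.update_of_ne h, h2 i hi]
    have hzS' : ∀ i, i ∉ S → z' i = 1 := by
      intro i hi
      by_cases h : i = a
      · subst h; simp [hz'_def]
      · have : i ∉ insert a S := by simp [h, hi]
        simp [hz'_def, Function.update_of_ne h, h1 i this]
    have heJ : ∀ i ∈ J, e i = 1 := by
      intro i hi
      by_cases h : i = a
      · subst h
        simp [he_def, h2 i hi]
      · simp [he_def, Pi.mulSingle_eq_of_ne h]
    have hsplit : z = e * z' := by
      funext i
      by_cases h : i = a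
      · subst h; simp [he_def, hz'_def]
      · simp [he_def, hz'_def, Function.update_of_ne h, Pi.mulSingle_eq_of_ne h]
    have he : e ∈ H := hK e heJ
    have hz' : z' ∈ H := hK z' hzJ'
    have : (⟨z, hz⟩ : H) = ⟨e, he⟩ * ⟨z', hz'⟩ := by
      ext
      exact congrFun hsplit _
    rw [this, f.map_mul, IH z' hzS' hzJ' hz', mul_one]
    -- now show f ⟨e, he⟩ = 1
    by_cases haJ : a ∈ J
    · have : e = 1 := by
        have : z a = 1 := h2 a haJ
        simp [he_def, this]
      simp only [this]
      convert f.map_one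
      rfl
    · -- use perfectness of G a
      set g : G a →* A :=
        f.comp ((MonoidHom.mulSingle G a).codRestrict H
          (fun t => hK _ (fun i hi => Pi.mulSingle_eq_of_ne (fun h : i = a => haJ (h ▸ hi)) t)))
        with hg
      have hker : MonoidHom.ker g = ⊤ := by
        rw [eq_top_iff, ← hperf a]
        exact Abelianization.commutator_subset_ker g
      have : g (z a) = 1 := by
        have := (hker ▸ Subgroup.mem_top (z a) : z a ∈ MonoidHom.ker g)
        exact this
      calc f ⟨e, he⟩ = g (z a) := rfl
        _ = 1 := this


/-- In a product `G = ∏ᵢ Gᵢ` of finite perfect groups (with the product topology), every open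
subgroup `H` has only finitely many closed normal subgroups with cyclic quotient of order `n`. -/
theorem stmt8 (ι : Type*) (G : ι → Type*) [∀ i, Group (G i)] [∀ i, Finite (G i)]
    [∀ i, TopologicalSpace (G i)] [∀ i, DiscreteTopology (G i)]
    (hperf : ∀ i, commutator (G i) = ⊤)
    (H : Subgroup (∀ i, G i)) (hopen : IsOpen (H : Set (∀ i, G i))) (n : ℕ) (hn : 0 < n) :
    (cyclicKernels H n).Finite := by
  classical
  -- find a finite set J such that everything trivial on J lies in H
  obtain ⟨J, u, hu, hsub⟩ := isOpen_pi_iff.mp hopen 1 H.one_mem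
  have hK : ∀ z : ∀ i, G i, (∀ i ∈ J, z i = 1) → z ∈ H := by
    intro z hz
    apply hsub
    intro i hi
    have := (hu i hi).2
    simpa [hz i hi] using this
  -- the subgroup K' of H of elements trivial on J
  set φ : H →* (∀ i : J, G i) :=
    (Pi.monoidHom fun i : J => Pi.evalMonoidHom G i).comp H.subtype with hφ
  set K' : Subgroup H := φ.ker with hK'
  have hmemK' : ∀ x : H, x ∈ K' ↔ ∀ i ∈ J, (x : ∀ i, G i) i = 1 := by
    intro x
    constructor
    · intro hx i hi
      exact congrFun hx ⟨i, hi⟩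
    · intro hx
      funext i
      exact hx i i.2
  -- H ⧸ K' is finite
  have hfin : Finite (H ⧸ K') :=
    Finite.of_injective _ (QuotientGroup.kerLift_injective φ)
  -- every N in cyclicKernels contains K'
  have hle : ∀ N ∈ cyclicKernels H n, K' ≤ N := by
    rintro N ⟨hclosed, f, -, hker⟩
    intro x hx
    have hx' := (hmemK' x).mp hx
    -- x is in the closure of N
    have hcl : x ∈ closure (N : Set H) := by
      rw [mem_closure_iff]
      intro o ho hxo
      obtain ⟨V, hV, rfl⟩ := isOpen_induced_iff.mp ho
      obtain ⟨S, v, hv, hsubV⟩ := isOpen_pi_iff.mp hV x hxo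
      set y : ∀ i, G i := fun i => if i ∈ S then (x : ∀ i, G i) i else 1 with hy
      have hyJ : ∀ i ∈ J, y i = 1 := by
        intro i hi
        by_cases h : i ∈ S <;> simp [hy, h, hx' i hi]
      have hyS : ∀ i, i ∉ S → y i = 1 := by
        intro i hi; simp [hy, hi]
      have hyH : y ∈ H := hK y hyJ
      refine ⟨⟨y, hyH⟩, ?_, ?_⟩
      · show y ∈ V
        apply hsubV
        intro i hi
        have hi' : i ∈ S := hi
        simpa [hy, hi'] using (hv i hi).2
      · show (⟨y, hyH⟩ : H) ∈ N
        rw [← hker]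
        exact aux_key hperf J H hK f S y hyS hyJ hyH
    rwa [hclosed.closure_eq] at hcl
  -- finiteness via mapping to subgroups of the finite quotient
  have : Finite (Subgroup (H ⧸ K')) :=
    Finite.of_injective (fun N => (N : Set (H ⧸ K'))) SetLike.coe_injective
  apply Set.Finite.of_finite_image (f := Subgroup.map (QuotientGroup.mk' K'))
  · exact Set.toFinite _
  · intro N₁ h₁ N₂ h₂ h
    have e₁ : Subgroup.comap (QuotientGroup.mk' K') (Subgroup.map (QuotientGroup.mk' K') N₁) = N₁ := by
      rw [Subgroup.comap_map_eq, QuotientGroup.ker_mk', sup_eq_left]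
      exact hle N₁ h₁
    have e₂ : Subgroup.comap (QuotientGroup.mk' K') (Subgroup.map (QuotientGroup.mk' K') N₂) = N₂ := by
      rw [Subgroup.comap_map_eq, QuotientGroup.ker_mk', sup_eq_left]
      exact hle N₂ h₂
    rw [← e₁, ← e₂, h]
end

section
/- Let (F,v) be a henselian valued field with residue field of characteristic 0 containing all roots of unity, and value group Γ. If [Γ : pΓ] = ∞ for some prime p, then F^×/(F^×)^p is infinite, and consequently F satisfies neither (F1) (finitely many extensions of each degree) nor (F2) (finiteness of E^×/(E^×)^n for all finite extensions E and all n). -/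
/-- Property (F1) for a field `K` : for every `n`, `K` has only finitely many extensions of
degree `n` inside a fixed algebraic closure. -/
def CondF1 (K : Type*) [Field K] : Prop :=
  ∀ n : ℕ, {E : IntermediateField K (AlgebraicClosure K) |
    FiniteDimensional K E ∧ Module.finrank K E = n}.Finite

/-- Property (F2) for a field `K` : for every `n ≥ 1` and every finite extension `E` of `K`
(inside a fixed algebraic closure), `Eˣ/(Eˣ)ⁿ` is finite. -/
def CondF2 (K : Type*) [Field K] : Prop :=
  ∀ n : ℕ, 0 < n → ∀ E : IntermediateField K (AlgebraicClosure K), FiniteDimensional K E →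
    Finite (Eˣ ⧸ (powMonoidHom n : Eˣ →* Eˣ).range)

open IntermediateField Polynomial

private lemma powRange_map {G H : Type*} [CommGroup G] [CommGroup H] (e : G ≃* H) (n : ℕ) :
    ((powMonoidHom n : G →* G).range.map e.toMonoidHom) = (powMonoidHom n : H →* H).range := by
  ext y
  simp only [Subgroup.mem_map, MonoidHom.mem_range, powMonoidHom_apply]
  constructor
  · rintro ⟨x, ⟨c, rfl⟩, rfl⟩
    exact ⟨e c, by rw [← map_pow]; rfl⟩
  · rintro ⟨d, rfl⟩
    exact ⟨e.symm d ^ n, ⟨e.symm d, rfl⟩, by rw [map_pow]; simp⟩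

private noncomputable def quotPowEquiv {G H : Type*} [CommGroup G] [CommGroup H] (e : G ≃* H)
    (n : ℕ) :
    (G ⧸ (powMonoidHom n : G →* G).range) ≃* (H ⧸ (powMonoidHom n : H →* H).range) :=
  QuotientGroup.congr _ _ e (powRange_map e n)

private lemma infinite_quot_of_surj {G H : Type*} [CommGroup G] [CommGroup H] (φ : G →* H)
    (hφ : Function.Surjective φ) (n : ℕ)
    (h : Infinite (H ⧸ (powMonoidHom n : H →* H).range)) :
    Infinite (G ⧸ (powMonoidHom n : G →* G).range) := by
  have hle : (powMonoidHom n : G →* G).range ≤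
      ((powMonoidHom n : H →* H).range).comap φ := by
    rintro x ⟨c, rfl⟩
    exact ⟨φ c, by simp [powMonoidHom_apply, map_pow]⟩
  have hsurj : Function.Surjective (QuotientGroup.map _ _ φ hle) := by
    intro y
    obtain ⟨h', rfl⟩ := QuotientGroup.mk_surjective y
    obtain ⟨g, rfl⟩ := hφ h'
    exact ⟨QuotientGroup.mk g, rfl⟩
  exact Infinite.of_surjective _ hsurj

private lemma ratio_lemma' {F A : Type*} [Field F] [Field A] [Algebra F A] {p : ℕ} [NeZero p]
    {ζ : F} (hζ : IsPrimitiveRoot ζ p) {x y : A} (hy : y ≠ 0) (h : x ^ p = y ^ p) :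
    ∃ j : ℕ, x = algebraMap F A (ζ ^ j) * y := by
  have hζA : IsPrimitiveRoot (algebraMap F A ζ) p :=
    hζ.map_of_injective (algebraMap F A).injective
  have h1 : (x / y) ^ p = 1 := by rw [div_pow, h, div_self (pow_ne_zero _ hy)]
  obtain ⟨j, -, hj⟩ := hζA.eq_pow_of_pow_eq_one h1
  refine ⟨j, ?_⟩
  rw [map_pow]
  rw [eq_comm, div_eq_iff hy] at hj
  rw [← hj]

private lemma adjoin_unit_mul {F A : Type*} [Field F] [Field A] [Algebra F A]
    (u : F) (hu : u ≠ 0) (x : A) : F⟮algebraMap F A u * x⟯ = F⟮x⟯ := by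
  apply le_antisymm
  · rw [adjoin_simple_le_iff]
    exact mul_mem (IntermediateField.algebraMap_mem _ u) (mem_adjoin_simple_self F x)
  · rw [adjoin_simple_le_iff]
    have hmem : algebraMap F A u⁻¹ * (algebraMap F A u * x) ∈ F⟮algebraMap F A u * x⟯ :=
      mul_mem (IntermediateField.algebraMap_mem _ _) (mem_adjoin_simple_self F _)
    rwa [← mul_assoc, ← map_mul, inv_mul_cancel₀ hu, map_one, one_mul] at hmem

private lemma fiber_lemma {F : Type*} [Field F] {p : ℕ} (hp : p.Prime) {ζ : F}
    (hζ : IsPrimitiveRoot ζ p) {A : Type*} [Field A] [Algebra F A]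
    {a b : Fˣ} {α β : A} (hα : α ^ p = algebraMap F A (a : F))
    (hβ : β ^ p = algebraMap F A (b : F)) (H : Irreducible (X ^ p - C (a : F)))
    (hL : F⟮α⟯ = F⟮β⟯) :
    ∃ (j : ℕ) (d : Fˣ), (b : F) = (d : F) ^ p * (a : F) ^ j := by
  haveI : NeZero p := ⟨hp.ne_zero⟩
  have hK : (primitiveRoots p F).Nonempty :=
    ⟨ζ, (mem_primitiveRoots hp.pos).mpr hζ⟩
  set L : IntermediateField F A := F⟮α⟯ with hLdef
  have hint : IsIntegral F α :=
    ⟨X ^ p - C (a : F), monic_X_pow_sub_C _ hp.ne_zero,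
      by rw [eval₂_sub, eval₂_X_pow, eval₂_C, hα, sub_self]⟩
  haveI : FiniteDimensional F L := IntermediateField.adjoin.finiteDimensional hint
  have hminpoly : minpoly F α = X ^ p - C (a : F) :=
    (minpoly.eq_of_irreducible_of_monic H
      (by rw [aeval_def, eval₂_sub, eval₂_X_pow, eval₂_C, hα, sub_self])
      (monic_X_pow_sub_C _ hp.ne_zero)).symm
  have hfr : Module.finrank F L = p := by
    rw [hLdef, IntermediateField.adjoin.finrank hint, hminpoly, natDegree_X_pow_sub_C]
  set α' : L := AdjoinSimple.gen F α with hα'def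
  have hgen : F⟮α'⟯ = ⊤ := by
    apply lift_injective
    rw [lift_adjoin_simple]
    show F⟮(α' : A)⟯ = lift ⊤
    rw [AdjoinSimple.coe_gen, lift_top]
  have hα'pow : α' ^ p = algebraMap F L (a : F) := by
    apply Subtype.ext
    push_cast
    rw [AdjoinSimple.coe_gen, hα]
  have hα'ne : α' ≠ 0 := by
    intro h
    rw [h, zero_pow hp.ne_zero] at hα'pow
    exact a.ne_zero ((_root_.map_eq_zero _).mp hα'pow.symm)
  haveI hsplit : IsSplittingField F L (X ^ p - C (a : F)) := by
    have h1 : α' ^ Module.finrank F L = algebraMap F L (a : F) := by rw [hfr]; exact hα'pow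
    have h2 : (primitiveRoots (Module.finrank F L) F).Nonempty := by rw [hfr]; exact hK
    have := isSplittingField_X_pow_sub_C_of_root_adjoin_eq_top h2 h1 hgen
    rwa [hfr] at this
  haveI : IsGalois F L := isGalois_of_isSplittingField_X_pow_sub_C hK H L
  have hβmem : β ∈ L := by
    rw [hL]; exact mem_adjoin_simple_self F β
  set β' : L := ⟨β, hβmem⟩ with hβ'def
  have hβ'pow : β' ^ p = algebraMap F L (b : F) := by
    apply Subtype.ext
    push_cast
    rw [hβ]
  have hβ'ne : β' ≠ 0 := by
    intro h
    rw [h, zero_pow hp.ne_zero] at hβ'pow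
    exact b.ne_zero ((_root_.map_eq_zero _).mp hβ'pow.symm)
  set e := autEquivZmod H L hζ with hedef
  set σ : L ≃ₐ[F] L := e.symm (Multiplicative.ofAdd (1 : ZMod p)) with hσdef
  have hσα : σ α' = algebraMap F L ζ * α' := by
    have := autEquivZmod_symm_apply_natCast H L hα'pow hζ 1
    rw [Nat.cast_one, pow_one] at this
    rw [hσdef, hedef, this, Algebra.smul_def]
  have hσβpow : (σ β') ^ p = β' ^ p := by
    rw [← map_pow, hβ'pow, AlgEquiv.commutes]
  obtain ⟨j, hj⟩ := ratio_lemma' hζ hβ'ne hσβpow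
  set δ : L := β' / α' ^ j with hδdef
  have hζLne : (algebraMap F L ζ) ^ j ≠ 0 :=
    pow_ne_zero _ ((_root_.map_ne_zero _).mpr (hζ.ne_zero hp.ne_zero))
  have hσδ : σ δ = δ := by
    rw [hδdef, map_div₀, map_pow, hσα, hj, map_pow, mul_pow, mul_div_mul_left _ _ hζLne]
  have hpow : ∀ m : ℕ, (σ ^ m) δ = δ := by
    intro m
    induction m with
    | zero => rfl
    | succ k ih => rw [pow_succ, AlgEquiv.mul_apply, hσδ, ih]
  have hgen' : ∀ τ : L ≃ₐ[F] L, ∃ m : ℕ, τ = σ ^ m := by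
    intro τ
    refine ⟨(Multiplicative.toAdd (e τ)).val, ?_⟩
    have h1 : σ ^ (Multiplicative.toAdd (e τ)).val =
        e.symm (Multiplicative.ofAdd (((Multiplicative.toAdd (e τ)).val : ZMod p))) := by
      rw [hσdef, ← map_pow]
      congr 1
      rw [← ofAdd_nsmul, nsmul_eq_mul, mul_one]
    have h2 : (((Multiplicative.toAdd (e τ)).val : ℕ) : ZMod p) =
        Multiplicative.toAdd (e τ) := ZMod.natCast_rightInverse _
    rw [h1, h2]
    simp
  have hδbot : δ ∈ (⊥ : IntermediateField F L) := by
    have hbot : (⊥ : IntermediateField F L) =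
        (IsGalois.intermediateFieldEquivSubgroup (F := F) (E := L)).symm ⊥ :=
      (OrderIso.map_bot _).symm
    rw [hbot]
    rintro ⟨τ, -⟩
    obtain ⟨m, rfl⟩ := hgen' τ
    exact hpow m
  obtain ⟨d, hd⟩ := IntermediateField.mem_bot.mp hδbot
  have hδne : δ ≠ 0 := div_ne_zero hβ'ne (pow_ne_zero _ hα'ne)
  have hdne : d ≠ 0 := by
    intro h
    rw [h, map_zero] at hd
    exact hδne hd.symm
  have hβeq : β' = algebraMap F L d * α' ^ j := by
    rw [hd, hδdef, div_mul_cancel₀ _ (pow_ne_zero _ hα'ne)]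
  have hfin : algebraMap F L (b : F) = algebraMap F L (d ^ p * (a : F) ^ j) := by
    rw [← hβ'pow, hβeq, mul_pow, ← map_pow, ← pow_mul, mul_comm j p, pow_mul, hα'pow,
      ← map_pow, ← map_mul, map_mul, map_pow]
  refine ⟨j, Units.mk0 d hdne, (algebraMap F L).injective hfin⟩

private lemma notF1_aux {F : Type*} [Field F] {p : ℕ} (hp : p.Prime) {ζ : F}
    (hζ : IsPrimitiveRoot ζ p)
    (hQ : Infinite (Fˣ ⧸ (powMonoidHom p : Fˣ →* Fˣ).range)) : ¬ CondF1 F := by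
  intro h1
  haveI : NeZero p := ⟨hp.ne_zero⟩
  set A := AlgebraicClosure F with hA
  set R := (powMonoidHom p : Fˣ →* Fˣ).range with hR
  have halg : ∀ a : Fˣ, ∃ α : A, α ^ p = algebraMap F A (a : F) := fun a =>
    IsAlgClosed.exists_pow_nat_eq _ hp.pos
  choose rt hrt using halg
  set f : Fˣ → IntermediateField F A := fun a => F⟮rt a⟯ with hf
  have hrt_ne : ∀ a : Fˣ, rt a ≠ 0 := by
    intro a h
    have := hrt a
    rw [h, zero_pow hp.ne_zero] at this
    exact a.ne_zero ((_root_.map_eq_zero _).mp this.symm)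
  have hcases : ∀ a : Fˣ, (∃ c : Fˣ, c ^ p = a) ∨ Irreducible (X ^ p - C (a : F)) := by
    intro a
    by_cases hA' : ∃ c : F, c ^ p = (a : F)
    · obtain ⟨c, hc⟩ := hA'
      have hc0 : c ≠ 0 := by
        intro h
        rw [h, zero_pow hp.ne_zero] at hc
        exact a.ne_zero hc.symm
      exact Or.inl ⟨Units.mk0 c hc0, Units.ext (by simpa using hc)⟩
    · push_neg at hA'
      exact Or.inr (X_pow_sub_C_irreducible_of_prime hp hA')
  have hsq : ∀ a : Fˣ, (∃ c : Fˣ, c ^ p = a) → f a = ⊥ := by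
    intro a ⟨c, hc⟩
    have hcc : rt a ^ p = (algebraMap F A (c : F)) ^ p := by
      rw [hrt, ← map_pow]
      congr 1
      rw [← hc]
      rfl
    obtain ⟨j, hj⟩ := ratio_lemma' hζ ((_root_.map_ne_zero _).mpr c.ne_zero) hcc
    show F⟮rt a⟯ = ⊥
    rw [hj, ← map_mul, adjoin_simple_eq_bot_iff]
    exact IntermediateField.algebraMap_mem _ _
  have hwd : ∀ a b : Fˣ, a⁻¹ * b ∈ R → f a = f b := by
    intro a b hab
    obtain ⟨c, hc⟩ := hab
    have hb : (b : F) = (a : F) * (c : F) ^ p := by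
      have hbu : (b : Fˣ) = a * c ^ p := by
        have hc' := hc
        rw [powMonoidHom_apply] at hc'
        rw [hc']
        group
      rw [hbu]
      push_cast
      ring
    have hcc : rt b ^ p = (algebraMap F A (c : F) * rt a) ^ p := by
      rw [mul_pow, ← map_pow, hrt, hrt, ← map_mul, hb]
      ring_nf
    obtain ⟨j, hj⟩ := ratio_lemma' hζ
      (mul_ne_zero ((_root_.map_ne_zero _).mpr c.ne_zero) (hrt_ne a)) hcc
    show F⟮rt a⟯ = F⟮rt b⟯
    rw [hj, ← mul_assoc, ← map_mul]
    exact (adjoin_unit_mul _ (mul_ne_zero (pow_ne_zero _ (hζ.ne_zero hp.ne_zero))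
      c.ne_zero) (rt a)).symm
  set g : (Fˣ ⧸ R) → IntermediateField F A :=
    Quotient.lift f (fun a b h => hwd a b (QuotientGroup.leftRel_apply.mp h)) with hg
  set T : Set (IntermediateField F A) :=
    {E | FiniteDimensional F E ∧ Module.finrank F E = 1} ∪
    {E | FiniteDimensional F E ∧ Module.finrank F E = p} with hT
  have hTfin : T.Finite := (h1 1).union (h1 p)
  have hmemT : ∀ a : Fˣ, f a ∈ T := by
    intro a
    rcases hcases a with h | H
    · left
      rw [hsq a h]
      exact ⟨inferInstance, IntermediateField.finrank_bot⟩
    · right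
      have hint : IsIntegral F (rt a) :=
        ⟨X ^ p - C (a : F), monic_X_pow_sub_C _ hp.ne_zero,
          by rw [eval₂_sub, eval₂_X_pow, eval₂_C, hrt, sub_self]⟩
      have hminpoly : minpoly F (rt a) = X ^ p - C (a : F) :=
        (minpoly.eq_of_irreducible_of_monic H
          (by rw [aeval_def, eval₂_sub, eval₂_X_pow, eval₂_C, hrt, sub_self])
          (monic_X_pow_sub_C _ hp.ne_zero)).symm
      refine ⟨IntermediateField.adjoin.finiteDimensional hint, ?_⟩
      show Module.finrank F F⟮rt a⟯ = p
      rw [IntermediateField.adjoin.finrank hint, hminpoly, natDegree_X_pow_sub_C]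
  have horder : ∀ x : Fˣ ⧸ R, x ^ p = 1 := by
    intro x
    obtain ⟨a, rfl⟩ := QuotientGroup.mk_surjective x
    show (QuotientGroup.mk' R a) ^ p = 1
    rw [← map_pow]
    exact (QuotientGroup.eq_one_iff _).mpr ⟨a, rfl⟩
  have hfiber : ∀ a b : Fˣ, f a = f b →
      ∃ j : ℕ, (QuotientGroup.mk b : Fˣ ⧸ R) = (QuotientGroup.mk a : Fˣ ⧸ R) ^ j := by
    intro a b hab
    rcases hcases a with h | H
    · have hbot : f b = ⊥ := by rw [← hab, hsq a h]
      have hmem : rt b ∈ (⊥ : IntermediateField F A) := by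
        have := mem_adjoin_simple_self F (rt b)
        rwa [show F⟮rt b⟯ = f b from rfl, hbot] at this
      obtain ⟨d, hd⟩ := IntermediateField.mem_bot.mp hmem
      have hd0 : d ≠ 0 := by
        intro h0
        rw [h0, map_zero] at hd
        exact hrt_ne b hd.symm
      have hb : (d : F) ^ p = (b : F) := by
        apply (algebraMap F A).injective
        rw [map_pow, hd, hrt b]
      refine ⟨0, ?_⟩
      rw [pow_zero]
      exact (QuotientGroup.eq_one_iff _).mpr ⟨Units.mk0 d hd0, Units.ext (by simpa using hb)⟩
    · obtain ⟨j, d, hbd⟩ := fiber_lemma hp hζ (hrt a) (hrt b) H hab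
      refine ⟨j, ?_⟩
      have hub : (b : Fˣ) = a ^ j * d ^ p := Units.ext (by push_cast; rw [hbd]; ring)
      rw [hub]
      show QuotientGroup.mk' R (a ^ j * d ^ p) = (QuotientGroup.mk' R a) ^ j
      have h1 : QuotientGroup.mk' R (d ^ p) = 1 := (QuotientGroup.eq_one_iff _).mpr ⟨d, rfl⟩
      calc QuotientGroup.mk' R (a ^ j * d ^ p)
          = QuotientGroup.mk' R (a ^ j) * QuotientGroup.mk' R (d ^ p) := map_mul _ _ _
        _ = QuotientGroup.mk' R (a ^ j) := by rw [h1]; exact mul_one ((QuotientGroup.mk' R) (a ^ j))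
        _ = (QuotientGroup.mk' R a) ^ j := map_pow _ _ _
  have hfibfin : ∀ L ∈ T, (g ⁻¹' {L}).Finite := by
    intro L _
    by_cases hne : (g ⁻¹' {L}).Nonempty
    · obtain ⟨x₀, hx₀⟩ := hne
      obtain ⟨a₀, rfl⟩ := QuotientGroup.mk_surjective x₀
      apply Set.Finite.subset (Set.finite_range
        (fun m : Fin p => (QuotientGroup.mk a₀ : Fˣ ⧸ R) ^ (m : ℕ)))
      intro y hy
      obtain ⟨b, rfl⟩ := QuotientGroup.mk_surjective y
      have h1 : f a₀ = L := hx₀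
      have h2 : f b = L := hy
      obtain ⟨m, hm⟩ := hfiber a₀ b (h1.trans h2.symm)
      refine ⟨⟨m % p, Nat.mod_lt _ hp.pos⟩, ?_⟩
      show (QuotientGroup.mk a₀ : Fˣ ⧸ R) ^ (m % p) = QuotientGroup.mk b
      rw [hm]
      exact (pow_eq_pow_mod m (horder _)).symm
    · rw [Set.not_nonempty_iff_eq_empty] at hne
      rw [hne]
      exact Set.finite_empty
  have huniv : (Set.univ : Set (Fˣ ⧸ R)) ⊆ ⋃ L ∈ T, g ⁻¹' {L} := by
    intro x _
    obtain ⟨a, rfl⟩ := QuotientGroup.mk_surjective x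
    exact Set.mem_biUnion (hmemT a) rfl
  exact Set.infinite_univ ((hTfin.biUnion hfibfin).subset huniv)

/-- Let `(F,v)` be a henselian valued field with residue field of characteristic `0`,
containing all roots of unity, and value group `Γ = Γ₀ˣ`.  If `[Γ : pΓ] = ∞` for some prime
`p`, then `Fˣ/(Fˣ)ᵖ` is infinite, and `F` satisfies neither (F1) nor (F2). -/
theorem stmt15 (F : Type*) [Field F] (Γ₀ : Type*) [LinearOrderedCommGroupWithZero Γ₀]
    (v : Valuation F Γ₀) (hv : Function.Surjective v)
    [HenselianLocalRing v.valuationSubring]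
    [CharZero (IsLocalRing.ResidueField v.valuationSubring)]
    (hμ : ∀ n : ℕ, 0 < n → ∃ ζ : F, IsPrimitiveRoot ζ n)
    (p : ℕ) (hp : p.Prime)
    (hΓ : Infinite (Γ₀ˣ ⧸ (powMonoidHom p : Γ₀ˣ →* Γ₀ˣ).range)) :
    Infinite (Fˣ ⧸ (powMonoidHom p : Fˣ →* Fˣ).range) ∧ ¬ CondF1 F ∧ ¬ CondF2 F := by
  obtain ⟨ζ, hζ⟩ := hμ p hp.pos
  have hsurj : Function.Surjective
      (Units.map (v.toMonoidWithZeroHom.toMonoidHom) : Fˣ →* Γ₀ˣ) := by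
    intro γ
    obtain ⟨x, hx⟩ := hv (γ : Γ₀)
    have hx0 : x ≠ 0 := by
      intro h
      rw [h, map_zero] at hx
      exact γ.ne_zero hx.symm
    exact ⟨Units.mk0 x hx0, Units.ext hx⟩
  have hQ : Infinite (Fˣ ⧸ (powMonoidHom p : Fˣ →* Fˣ).range) :=
    infinite_quot_of_surj _ hsurj p hΓ
  refine ⟨hQ, notF1_aux hp hζ hQ, ?_⟩
  intro h2
  set B := (⊥ : IntermediateField F (AlgebraicClosure F)) with hB
  haveI hfinB : Finite (Bˣ ⧸ (powMonoidHom p : Bˣ →* Bˣ).range) := h2 p hp.pos B inferInstance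
  have e : Fˣ ≃* Bˣ :=
    Units.mapEquiv (IntermediateField.botEquiv F (AlgebraicClosure F)).symm.toRingEquiv.toMulEquiv
  haveI : Infinite (Bˣ ⧸ (powMonoidHom p : Bˣ →* Bˣ).range) :=
    ((quotPowEquiv e p).toEquiv.infinite_iff).mp hQ
  exact not_finite (Bˣ ⧸ (powMonoidHom p : Bˣ →* Bˣ).range)
end
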